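/- arXiv:2210.13682 — 3 statements merged into one kernel-verified Lean document; each statement's English description precedes it below -/
import Mathlib

section
/- Let A and B be graph-consistent hashgraphs on n parties, with at most t corrupted parties where 3t < n, and suppose no two events created by the same honest party form a fork. If events x and y form a fork and some event z contained in A strongly sees x in A, then no event contained in B strongly sees y in B. -/
open Classical

attribute [local instance] Classical.propDecidable

noncomputable section

/-- A hashgraph: a finite set of events together with (optional) self-parent and
other-parent pointers, a round assignment and a vote function
(`vote y x` is the vote cast by witness `y` in the famousness election of witness `x`).
Events are identified across hashgraphs: they come from a common type `E`, and their
creator, signature and timestamp are given by globally fixed functions `E → ℕ`. -/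
structure Hashgraph (E : Type) where
  events : Finset E
  selfParent : E → Option E
  otherParent : E → Option E
  round : E → ℕ
  vote : E → E → Bool

namespace Hashgraph

variable {E : Type}

/-- `H.Parent x y` : `y` is a parent of `x` in `H`. -/
def Parent (H : Hashgraph E) (x y : E) : Prop :=
  H.selfParent x = some y ∨ H.otherParent x = some y

/-- `H.Ancestor y x` : `y` is an ancestor of `x` in `H` (reflexively). -/
def Ancestor (H : Hashgraph E) (y x : E) : Prop :=
  Relation.ReflTransGen H.Parent x y

/-- `H.SelfAncestor y x` : `y` is a self-ancestor of `x` in `H` (reflexively). -/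
def SelfAncestor (H : Hashgraph E) (y x : E) : Prop :=
  Relation.ReflTransGen (fun a b => H.selfParent a = some b) x y

/-- `(x, y)` is a fork in `H`: same creator, neither an ancestor of the other. -/
def Fork (creator : E → ℕ) (H : Hashgraph E) (x y : E) : Prop :=
  creator x = creator y ∧ ¬ H.Ancestor x y ∧ ¬ H.Ancestor y x

/-- `x` observes a fork from party `p` in `H`. -/
def ObservesForkFrom (creator : E → ℕ) (H : Hashgraph E) (x : E) (p : ℕ) : Prop :=
  ∃ z z', H.Ancestor z x ∧ H.Ancestor z' x ∧ creator z = p ∧ creator z' = p ∧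
    Fork creator H z z'

/-- `x` sees `y` in `H`. -/
def Sees (creator : E → ℕ) (H : Hashgraph E) (x y : E) : Prop :=
  H.Ancestor y x ∧ ¬ ObservesForkFrom creator H x (creator y)

/-- `x` strongly sees `y` in `H`: `x` sees more than `2n/3` events with pairwise
distinct creators, each of which sees `y`. -/
def StronglySees (creator : E → ℕ) (n : ℕ) (H : Hashgraph E) (x y : E) : Prop :=
  ∃ S : Finset E, (↑S : Set E) ⊆ (↑H.events : Set E) ∧
    (∀ z ∈ S, Sees creator H x z ∧ Sees creator H z y) ∧
    Set.InjOn creator ↑S ∧ 2 * n < 3 * S.card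

/-- An event is a witness if it has no self-parent or its round exceeds its
self-parent's round. -/
def Witness (H : Hashgraph E) (x : E) : Prop :=
  x ∈ H.events ∧ ∀ y, H.selfParent x = some y → H.round y < H.round x

/-- The maximum round among the parents of `x` (0 for a missing parent). -/
def maxParentRound (H : Hashgraph E) (x : E) : ℕ :=
  max (match H.selfParent x with | some y => H.round y | none => 0)
      (match H.otherParent x with | some y => H.round y | none => 0)

/-- `x` strongly sees more than `2n/3` round-`r` witnesses with distinct creators. -/
def PromotedAt (creator : E → ℕ) (n : ℕ) (H : Hashgraph E) (x : E) (r : ℕ) : Prop :=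
  ∃ S : Finset E, (↑S : Set E) ⊆ (↑H.events : Set E) ∧
    (∀ w ∈ S, H.Witness w ∧ H.round w = r ∧ StronglySees creator n H x w) ∧
    Set.InjOn creator ↑S ∧ 2 * n < 3 * S.card

/-- The set of round-`r` witnesses strongly seen by `y`. -/
def ssWitnesses (creator : E → ℕ) (n : ℕ) (H : Hashgraph E) (y : E) (r : ℕ) : Finset E :=
  H.events.filter (fun w => H.Witness w ∧ H.round w = r ∧ StronglySees creator n H y w)

/-- The majority vote in `x`'s election among the events of `s` (`true` i.e. yes on a tie). -/
def majorityVote (H : Hashgraph E) (x : E) (s : Finset E) : Bool :=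
  decide (s.card ≤ 2 * (s.filter (fun w => H.vote w x = true)).card)

/-- The middle bit of a signature. -/
def middleBit (s : ℕ) : Bool := s.testBit (s.size / 2)

/-- Validity of a hashgraph on `n` parties with coin-round period `c`, with respect to
globally fixed creators, signatures and timestamps: creators lie in `{1, …, n}`,
parents of events are events, a self-parent has the same creator, an other-parent a
different one, the graph is acyclic, rounds satisfy the recursive round assignment,
and votes satisfy the recursive voting rule of famousness elections. -/
structure Valid (creator sig ts : E → ℕ) (n c : ℕ) (H : Hashgraph E) : Prop where
  creator_mem : ∀ x ∈ H.events, 1 ≤ creator x ∧ creator x ≤ n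
  selfParent_mem : ∀ x ∈ H.events, ∀ y, H.selfParent x = some y → y ∈ H.events
  otherParent_mem : ∀ x ∈ H.events, ∀ y, H.otherParent x = some y → y ∈ H.events
  selfParent_creator : ∀ x ∈ H.events, ∀ y, H.selfParent x = some y → creator y = creator x
  otherParent_creator : ∀ x ∈ H.events, ∀ y, H.otherParent x = some y → creator y ≠ creator x
  acyclic : ∀ x ∈ H.events, ∀ y ∈ H.events, H.Ancestor x y → H.Ancestor y x → x = y
  round_genesis : ∀ x ∈ H.events, H.selfParent x = none → H.otherParent x = none →
    H.round x = 1
  round_spec : ∀ x ∈ H.events, (H.selfParent x ≠ none ∨ H.otherParent x ≠ none) →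
    H.round x = if PromotedAt creator n H x (H.maxParentRound x)
      then H.maxParentRound x + 1 else H.maxParentRound x
  vote_first : ∀ x ∈ H.events, H.Witness x → ∀ y ∈ H.events, H.Witness y →
    H.round y = H.round x + 1 → H.vote y x = decide (Sees creator H y x)
  vote_later : ∀ x ∈ H.events, H.Witness x → ∀ y ∈ H.events, H.Witness y →
    H.round x + 1 < H.round y →
    H.vote y x =
      if ¬ (c ∣ (H.round y - H.round x)) then
        majorityVote H x (ssWitnesses creator n H y (H.round y - 1))
      else if 2 * n < 3 * ((ssWitnesses creator n H y (H.round y - 1)).filter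
          (fun w => H.vote w x = majorityVote H x (ssWitnesses creator n H y (H.round y - 1)))).card then
        majorityVote H x (ssWitnesses creator n H y (H.round y - 1))
      else middleBit (sig y)

/-- `A` and `B` are graph-consistent: every event contained in both has the same
parent pointers and the same ancestors in `A` and in `B`. -/
def GraphConsistent (A B : Hashgraph E) : Prop :=
  ∀ x, x ∈ A.events → x ∈ B.events →
    A.selfParent x = B.selfParent x ∧ A.otherParent x = B.otherParent x ∧
    ∀ y, (A.Ancestor y x ↔ B.Ancestor y x)

/-- `H` decides the fame of the witness `x` to be `v`. -/
def Decides (creator : E → ℕ) (n c : ℕ) (H : Hashgraph E) (x : E) (v : Bool) : Prop :=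
  H.Witness x ∧ ∃ y ∈ H.events, H.Witness y ∧ H.round x + 2 ≤ H.round y ∧
    ¬ (c ∣ (H.round y - H.round x)) ∧
    2 * n < 3 * ((ssWitnesses creator n H y (H.round y - 1)).filter
      (fun w => H.vote w x = v)).card

/-- `x` is a unique famous witness of `H`: famous, and the only famous witness
with its creator and round. -/
def UniqueFamous (creator : E → ℕ) (n c : ℕ) (H : Hashgraph E) (x : E) : Prop :=
  Decides creator n c H x true ∧
    ∀ y ∈ H.events, Decides creator n c H y true → creator y = creator x →
      H.round y = H.round x → y = x

/-- The defining property of `roundReceived R` (without minimality): the fame of every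
witness of round at most `R` has been decided, and every round-`R` unique famous
witness sees `x`. -/
def RRAt (creator : E → ℕ) (n c : ℕ) (H : Hashgraph E) (x : E) (R : ℕ) : Prop :=
  (∀ w ∈ H.events, H.Witness w → H.round w ≤ R → ∃ v, Decides creator n c H w v) ∧
  (∀ w ∈ H.events, UniqueFamous creator n c H w → H.round w = R → Sees creator H w x)

/-- `x` has roundReceived `R` in `H`: `R` is the least round satisfying `RRAt`. -/
def RoundReceived (creator : E → ℕ) (n c : ℕ) (H : Hashgraph E) (x : E) (R : ℕ) : Prop :=
  RRAt creator n c H x R ∧ ∀ R' < R, ¬ RRAt creator n c H x R'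

/-- The median of a multiset of naturals. -/
def medianOf (l : Multiset ℕ) : ℕ :=
  (Multiset.sort l (· ≤ ·)).getD (Multiset.card l / 2) 0

/-- The set containing, for each round-`R` unique famous witness `y` of `H`, the
earliest self-ancestor of `y` having `x` as an ancestor. -/
def tsContributors (creator : E → ℕ) (n c : ℕ) (H : Hashgraph E) (x : E) (R : ℕ) : Finset E :=
  H.events.filter (fun z => ∃ y ∈ H.events, UniqueFamous creator n c H y ∧ H.round y = R ∧
    H.SelfAncestor z y ∧ H.Ancestor x z ∧ ∀ z', H.selfParent z = some z' → ¬ H.Ancestor x z')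

/-- The logical timestamp of `x`, given its roundReceived `R`. -/
def logicalTimestamp (creator ts : E → ℕ) (n c : ℕ) (H : Hashgraph E) (x : E) (R : ℕ) : ℕ :=
  medianOf ((tsContributors creator n c H x R).val.map ts)

/-- The whitened signature of `x`, given its roundReceived `R`: the XOR of `x`'s
signature with the signatures of all round-`R` unique famous witnesses. -/
def whitenedSig (creator sig : E → ℕ) (n c : ℕ) (H : Hashgraph E) (x : E) (R : ℕ) : ℕ :=
  (Multiset.sort
    ((H.events.filter (fun y => UniqueFamous creator n c H y ∧ H.round y = R)).val.map sig) (· ≤ ·)).foldr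
    Nat.xor (sig x)

/-- The roundReceived of `x` in `H`, as a value. -/
def rrVal (creator : E → ℕ) (n c : ℕ) (H : Hashgraph E) (x : E) : ℕ :=
  sInf {R | RoundReceived creator n c H x R}

/-- The sort key of an event: roundReceived, then logical timestamp, then whitened
signature. -/
def key (creator sig ts : E → ℕ) (n c : ℕ) (H : Hashgraph E) (x : E) : ℕ × ℕ × ℕ :=
  (rrVal creator n c H x,
   logicalTimestamp creator ts n c H x (rrVal creator n c H x),
   whitenedSig creator sig n c H x (rrVal creator n c H x))

/-- Lexicographic comparison of sort keys. -/
def keyLE (a b : ℕ × ℕ × ℕ) : Prop :=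
  a.1 < b.1 ∨ (a.1 = b.1 ∧ (a.2.1 < b.2.1 ∨ (a.2.1 = b.2.1 ∧ a.2.2 ≤ b.2.2)))

/-- `L` is the log of `H`: the list of all events of `H` that have a roundReceived,
sorted lexicographically by roundReceived, then logical timestamp, then whitened
signature. -/
def IsLog (creator sig ts : E → ℕ) (n c : ℕ) (H : Hashgraph E) (L : List E) : Prop :=
  (↑L : Multiset E) = (H.events.filter (fun x => ∃ R, RoundReceived creator n c H x R)).val ∧
  L.Pairwise (fun a b => keyLE (key creator sig ts n c H a) (key creator sig ts n c H b))

/-- No two events of `H` created by the same honest (non-corrupted) party form a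
fork in `H`. -/
def HonestForkFree1 (creator : E → ℕ) (corrupted : Finset ℕ) (H : Hashgraph E) : Prop :=
  ∀ x ∈ H.events, ∀ y ∈ H.events, creator x = creator y → creator x ∉ corrupted →
    (H.Ancestor x y ∨ H.Ancestor y x)

/-- No two events created by the same honest party, in any of the hashgraphs `A`, `B`,
form a fork. -/
def HonestForkFree2 [DecidableEq E] (creator : E → ℕ) (corrupted : Finset ℕ)
    (A B : Hashgraph E) : Prop :=
  ∀ x ∈ A.events ∪ B.events, ∀ y ∈ A.events ∪ B.events,
    creator x = creator y → creator x ∉ corrupted →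
    ((x ∈ A.events ∧ y ∈ A.events ∧ (A.Ancestor x y ∨ A.Ancestor y x)) ∨
     (x ∈ B.events ∧ y ∈ B.events ∧ (B.Ancestor x y ∨ B.Ancestor y x)))

/-- `H` is fork-free: no two of its events form a fork. -/
def ForkFree (creator : E → ℕ) (H : Hashgraph E) : Prop :=
  ∀ x ∈ H.events, ∀ y ∈ H.events, creator x = creator y →
    (H.Ancestor x y ∨ H.Ancestor y x)

/-- `H'` extends `H`: every event of `H` is an event of `H'` with the same parent
pointers (and hence the same round and votes). -/
def Extends (H' H : Hashgraph E) : Prop :=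
  H.events ⊆ H'.events ∧ ∀ x ∈ H.events,
    H'.selfParent x = H.selfParent x ∧ H'.otherParent x = H.otherParent x ∧
    H'.round x = H.round x ∧ ∀ y ∈ H.events, H'.vote x y = H.vote x y

/-- `w` strongly sees more than `2n/3` round-`r` witnesses with distinct creators,
all of which vote `v` in `x`'s famousness election (i.e. `w` does not determine its
round vote by coin flip). -/
def SeesQuorumVoting (creator : E → ℕ) (n : ℕ) (H : Hashgraph E) (w x : E) (r : ℕ)
    (v : Bool) : Prop :=
  ∃ S : Finset E, (↑S : Set E) ⊆ (↑H.events : Set E) ∧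
    (∀ u ∈ S, H.Witness u ∧ H.round u = r ∧ StronglySees creator n H w u ∧ H.vote u x = v) ∧
    Set.InjOn creator ↑S ∧ 2 * n < 3 * S.card

end Hashgraph

open Hashgraph
/-- Strongly Seeing Lemma (Lemma 5.12): for graph-consistent hashgraphs `A`, `B`
with at most `t` corrupted parties, `3t < n`, and no honest forks, if `(x, y)` is a
fork and some event `z` of `A` strongly sees `x` in `A`, then no event of `B`
strongly sees `y` in `B`. -/
theorem stmt0 {E : Type} [DecidableEq E] (creator sig ts : E → ℕ) (n c t : ℕ)
    (A B : Hashgraph E)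
    (hA : A.Valid creator sig ts n c) (hB : B.Valid creator sig ts n c)
    (hcons : GraphConsistent A B)
    (corrupted : Finset ℕ) (hcard : corrupted.card ≤ t) (ht : 3 * t < n)
    (hhonest : HonestForkFree2 creator corrupted A B)
    (x y z : E)
    (hfork : creator x = creator y ∧ ¬ A.Ancestor x y ∧ ¬ A.Ancestor y x ∧
      ¬ B.Ancestor x y ∧ ¬ B.Ancestor y x)
    (hz : z ∈ A.events) (hss : StronglySees creator n A z x) :
    ∀ w ∈ B.events, ¬ StronglySees creator n B w y := by
  intro w hw hssB
  obtain ⟨SA, hSAsub, hSA, hSAinj, hSAcard⟩ := hss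
  obtain ⟨SB, hSBsub, hSB, hSBinj, hSBcard⟩ := hssB
  -- creator images
  set CA := SA.image creator with hCA
  set CB := SB.image creator with hCB
  have hCAcard : CA.card = SA.card := Finset.card_image_of_injOn hSAinj
  have hCBcard : CB.card = SB.card := Finset.card_image_of_injOn hSBinj
  have hUnion : CA ∪ CB ⊆ Finset.Icc 1 n := by
    intro p hp
    rcases Finset.mem_union.mp hp with hp | hp
    · obtain ⟨a, ha, rfl⟩ := Finset.mem_image.mp hp
      have := hA.creator_mem a (hSAsub (Finset.mem_coe.mpr ha))
      exact Finset.mem_Icc.mpr this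
    · obtain ⟨b, hb, rfl⟩ := Finset.mem_image.mp hp
      have := hB.creator_mem b (hSBsub (Finset.mem_coe.mpr hb))
      exact Finset.mem_Icc.mpr this
  have hUcard : (CA ∪ CB).card ≤ n := by
    have := Finset.card_le_card hUnion
    simpa using this
  have hsum : CA.card + CB.card = (CA ∪ CB).card + (CA ∩ CB).card :=
    (Finset.card_union_add_card_inter CA CB).symm
  have hInterBig : t < (CA ∩ CB).card := by
    have h1 : 2 * n < 3 * CA.card := by rw [hCAcard]; exact hSAcard
    have h2 : 2 * n < 3 * CB.card := by rw [hCBcard]; exact hSBcard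
    omega
  have : ∃ p ∈ CA ∩ CB, p ∉ corrupted := by
    by_contra h
    push_neg at h
    have hsub : CA ∩ CB ⊆ corrupted := fun p hp => h p hp
    have := Finset.card_le_card hsub
    omega
  obtain ⟨p, hpmem, hphonest⟩ := this
  obtain ⟨a, haSA, hap⟩ := Finset.mem_image.mp (Finset.mem_of_mem_inter_left hpmem)
  obtain ⟨b, hbSB, hbp⟩ := Finset.mem_image.mp (Finset.mem_of_mem_inter_right hpmem)
  have haA : a ∈ A.events := hSAsub (Finset.mem_coe.mpr haSA)
  have hbB : b ∈ B.events := hSBsub (Finset.mem_coe.mpr hbSB)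
  obtain ⟨hSeesZA, hSeesAX⟩ := hSA a haSA
  obtain ⟨hSeesWB, hSeesBY⟩ := hSB b hbSB
  -- x is ancestor of a in A, y is ancestor of b in B
  have hxa : A.Ancestor x a := hSeesAX.1
  have hyb : B.Ancestor y b := hSeesBY.1
  have forkA : Fork creator A x y := ⟨hfork.1, hfork.2.1, hfork.2.2.1⟩
  have forkB : Fork creator B x y := ⟨hfork.1, hfork.2.2.2.1, hfork.2.2.2.2⟩
  have hcc : creator a = creator b := by rw [hap, hbp]
  have hh := hhonest a (Finset.mem_union_left _ haA) b (Finset.mem_union_right _ hbB)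
    hcc (by rw [hap]; exact hphonest)
  rcases hh with ⟨haA', hbA, hab⟩ | ⟨haB, hbB', hab⟩
  · -- both in A
    have hcb := (hcons b hbA hbB).2.2
    have hybA : A.Ancestor y b := (hcb y).mpr hyb
    rcases hab with hab | hba
    · -- a ancestor of b in A: b sees both x and y in A, hence in B
      have hxb : A.Ancestor x b := hab.trans hxa
      have hxbB : B.Ancestor x b := (hcb x).mp hxb
      exact hSeesBY.2 ⟨x, y, hxbB, hyb, hfork.1, rfl, forkB⟩
    · -- b ancestor of a in A: a observes fork in A
      have hya : A.Ancestor y a := hba.trans hybA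
      refine hSeesAX.2 ⟨x, y, hxa, hya, rfl, hfork.1.symm, forkA⟩
  · -- both in B
    have hca := (hcons a haA haB).2.2
    have hxaB : B.Ancestor x a := (hca x).mp hxa
    rcases hab with hab | hba
    · -- a ancestor of b in B
      have hxb : B.Ancestor x b := hab.trans hxaB
      exact hSeesBY.2 ⟨x, y, hxb, hyb, hfork.1, rfl, forkB⟩
    · -- b ancestor of a in B
      have hyaB : B.Ancestor y a := hba.trans hyb
      have hya : A.Ancestor y a := (hca y).mpr hyaB
      exact hSeesAX.2 ⟨x, y, hxa, hya, rfl, hfork.1.symm, forkA⟩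
end
end

section
/- Let A and B be graph-consistent hashgraphs on n parties, and let x and y be events contained in both A and B. If x sees y in A, then x sees y in B. -/
open Classical

attribute [local instance] Classical.propDecidable

noncomputable section

open Hashgraph

lemma ancestor_mem {E : Type} {creator sig ts : E → ℕ} {n c : ℕ} {H : Hashgraph E}
    (hV : H.Valid creator sig ts n c) {x y : E} (hx : x ∈ H.events)
    (h : H.Ancestor y x) : y ∈ H.events := by
  induction h with
  | refl => exact hx
  | tail _ hp ih =>
    cases hp with
    | inl hp => exact hV.selfParent_mem _ ih _ hp
    | inr hp => exact hV.otherParent_mem _ ih _ hp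

/-- Seeing is consistent: for graph-consistent hashgraphs `A` and `B` and events
`x`, `y` contained in both, if `x` sees `y` in `A` then `x` sees `y` in `B`. -/
theorem stmt2 {E : Type} (creator sig ts : E → ℕ) (n c : ℕ)
    (A B : Hashgraph E)
    (hA : A.Valid creator sig ts n c) (hB : B.Valid creator sig ts n c)
    (hcons : GraphConsistent A B)
    (x y : E) (hxA : x ∈ A.events) (hxB : x ∈ B.events)
    (hyA : y ∈ A.events) (hyB : y ∈ B.events)
    (h : Sees creator A x y) : Sees creator B x y := by
  obtain ⟨hanc, hnf⟩ := h
  have hiff := (hcons x hxA hxB).2.2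
  refine ⟨(hiff y).mp hanc, ?_⟩
  rintro ⟨z, z', hz, hz', hcz, hcz', hceq, hnzz', hnz'z⟩
  have hzB : z ∈ B.events := ancestor_mem hB hxB hz
  have hz'B : z' ∈ B.events := ancestor_mem hB hxB hz'
  have hzA' : A.Ancestor z x := (hiff z).mpr hz
  have hz'A' : A.Ancestor z' x := (hiff z').mpr hz'
  have hzA : z ∈ A.events := ancestor_mem hA hxA hzA'
  have hz'A : z' ∈ A.events := ancestor_mem hA hxA hz'A'
  exact hnf ⟨z, z', hzA', hz'A', hcz, hcz', hceq,
    fun hc => hnzz' ((hcons z' hz'A hz'B).2.2 z |>.mp hc),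
    fun hc => hnz'z ((hcons z hzA hzB).2.2 z' |>.mp hc)⟩
end
end

section
/- Let n ≥ 7 and let H be a fork-free hashgraph on n parties such that: every event of H has round at most r; each party has exactly one round-r witness in H; each party's round-r witness has no proper descendant in H created by the same party; no round-r witness is an ancestor of another round-r witness; and x is the round-r witness of party 1. Then there exists a fork-free hashgraph H′ extending H in which each party has exactly one round-(r+1) witness, no round-(r+1) witness is an ancestor of another round-(r+1) witness, exactly ⌊n/2⌋ of the round-(r+1) witnesses have x as an ancestor (and hence vote yes in x's famousness election), and the remaining n−⌊n/2⌋ round-(r+1) witnesses do not have x as an ancestor (and hence vote no). -/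
open Classical

attribute [local instance] Classical.propDecidable

noncomputable section

open Hashgraph

namespace Adv
open Hashgraph

/-- All data and hypotheses needed for the delay-attack construction. -/
structure Setup (E : Type) where
  creator : E → ℕ
  sig : E → ℕ
  ts : E → ℕ
  n : ℕ
  c : ℕ
  r : ℕ
  H : Hashgraph E
  x : E
  w : ℕ → E
  f : ℕ → ℕ → E
  hn : 7 ≤ n
  hH : H.Valid creator sig ts n c
  hff : ForkFree creator H
  hmax : ∀ e ∈ H.events, H.round e ≤ r
  htop : ∀ u ∈ H.events, H.Witness u → H.round u = r →
      ∀ e ∈ H.events, creator e = creator u → H.Ancestor u e → e = u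
  hnoanc : ∀ u ∈ H.events, H.Witness u → H.round u = r →
      ∀ u' ∈ H.events, H.Witness u' → H.round u' = r → H.Ancestor u u' → u = u'
  hw : ∀ p, 1 ≤ p → p ≤ n →
      w p ∈ H.events ∧ H.Witness (w p) ∧ H.round (w p) = r ∧ creator (w p) = p
  hwu : ∀ p, 1 ≤ p → p ≤ n → ∀ u ∈ H.events, H.Witness u → H.round u = r →
      creator u = p → u = w p
  hwx : w 1 = x
  hfc : ∀ p, 1 ≤ p → p ≤ n → ∀ i, creator (f p i) = p
  hfH : ∀ p, 1 ≤ p → p ≤ n → ∀ i, f p i ∉ H.events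
  hfi : ∀ p, 1 ≤ p → p ≤ n → Function.Injective (f p)

namespace Setup

variable {E : Type} [DecidableEq E] (S : Setup E)

def m : ℕ := 2 * S.n / 3 + 1

def T : Finset ℕ := Finset.Icc 2 (S.m + 1)

def A : Finset ℕ := insert 1 (insert 2 (Finset.Icc 4 (S.n / 2 + 1)))

def xf (p : ℕ) : ℕ := if p ∈ S.A ∧ p ≠ 1 then 1 else 0

def len (p : ℕ) : ℕ := 2 * (S.m - 1) + S.xf p

def top (p : ℕ) : ℕ := S.len p - 1

def aq (_S : Setup E) (p i : ℕ) : ℕ := if i + 2 < p then i + 2 else i + 3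

def Good (p k : ℕ) : Prop := 1 ≤ p ∧ p ≤ S.n ∧ k < S.len p

def newEvents : Finset E :=
  (Finset.Icc 1 S.n).biUnion (fun p => (Finset.range (S.len p)).image (S.f p))

def kOf (e : E) : ℕ := if h : ∃ k, S.f (S.creator e) k = e then Nat.find h else 0

def spTgt (p k : ℕ) : E := if k = 0 then S.w p else S.f p (k - 1)

def opTgt (p k : ℕ) : E :=
  if k < S.m - 1 then S.w (S.aq p k)
  else if k < S.m - 1 + S.xf p then S.x
  else S.f (S.aq p (k - (S.m - 1) - S.xf p)) (S.m - 2)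

def sp' (e : E) : Option E :=
  if e ∈ S.newEvents then some (S.spTgt (S.creator e) (S.kOf e)) else S.H.selfParent e

def op' (e : E) : Option E :=
  if e ∈ S.newEvents then some (S.opTgt (S.creator e) (S.kOf e)) else S.H.otherParent e

def ev' : Finset E := S.H.events ∪ S.newEvents

def rnd (e : E) : ℕ :=
  if e ∈ S.newEvents then (if S.kOf e = S.len (S.creator e) - 1 then S.r + 1 else S.r)
  else S.H.round e

def Par (a b : E) : Prop := S.sp' a = some b ∨ S.op' a = some b

def Anc (z e : E) : Prop := Relation.ReflTransGen S.Par e z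

def WWf : Finset E := S.T.image S.w

def M (b : E) : Bool :=
  decide (S.WWf.card ≤ 2 * (S.WWf.filter (fun w' => S.H.vote w' b = true)).card)

def vFormula (b a : E) : Bool :=
  if ¬ (S.c ∣ (S.r + 1 - S.H.round b)) then S.M b
  else if 2 * S.n < 3 * ((S.WWf.filter (fun w' => S.H.vote w' b = S.M b)).card) then S.M b
  else middleBit (S.sig a)

def vote' (a b : E) : Bool :=
  if a ∈ S.newEvents then
    (if S.rnd b = S.r then decide (S.Anc b a) else S.vFormula b a)
  else S.H.vote a b

def H' : Hashgraph E :=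
  { events := S.ev', selfParent := S.sp', otherParent := S.op', round := S.rnd,
    vote := S.vote' }

/-! ### basic arithmetic -/

set_option linter.unusedSectionVars false

theorem hm3 : 2 * S.n < 3 * S.m := by
  have h3 : 3 * (2 * S.n / 3) + 2 * S.n % 3 = 2 * S.n := by omega
  have := Nat.mod_lt (2 * S.n) (show 0 < 3 by norm_num)
  unfold m; omega

theorem hm5 : 5 ≤ S.m := by
  have h := S.hn
  have h3 : 3 * (2 * S.n / 3) + 2 * S.n % 3 = 2 * S.n := by omega
  have := Nat.mod_lt (2 * S.n) (show 0 < 3 by norm_num)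
  unfold m; omega

theorem hmn : S.m + 1 ≤ S.n := by
  have h := S.hn
  have h3 : 3 * (2 * S.n / 3) + 2 * S.n % 3 = 2 * S.n := by omega
  have := Nat.mod_lt (2 * S.n) (show 0 < 3 by norm_num)
  unfold m; omega

theorem xf_le (p : ℕ) : S.xf p ≤ 1 := by unfold xf; split <;> omega

theorem len_eq (p : ℕ) : S.len p = 2 * (S.m - 1) + S.xf p := rfl

theorem top_lt_len (p : ℕ) : S.top p < S.len p := by
  have := S.hm5; unfold top len; omega

end Setup
end Adv

namespace Adv
namespace Setup
open Hashgraph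

variable {E : Type} [DecidableEq E] (S : Setup E)

set_option linter.unusedSectionVars false

/-! ### aq facts -/

theorem aq_mem {p i : ℕ} (hi : i ≤ S.m - 2) : 2 ≤ S.aq p i ∧ S.aq p i ≤ S.m + 1 := by
  have := S.hm5; unfold aq; split <;> omega

theorem aq_ne {p i : ℕ} : S.aq p i ≠ p := by
  unfold aq; split <;> omega

theorem aq_inj {p : ℕ} : Function.Injective (S.aq p) := by
  intro i j h
  unfold aq at h; split at h <;> split at h <;> omega

theorem aq_surj {p q : ℕ} (hp2 : 2 ≤ p) (hpm : p ≤ S.m + 1) (hq2 : 2 ≤ q)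
    (hqm : q ≤ S.m + 1) (hqp : q ≠ p) : ∃ i ≤ S.m - 2, S.aq p i = q := by
  have := S.hm5
  rcases lt_or_gt_of_ne hqp with h | h
  · exact ⟨q - 2, by omega, by unfold aq; split <;> omega⟩
  · exact ⟨q - 3, by omega, by unfold aq; split <;> omega⟩

/-! ### decoding -/

theorem good_T {q k : ℕ} (hq2 : 2 ≤ q) (hqm : q ≤ S.m + 1) (hk : k ≤ 2 * (S.m - 1) - 1) :
    S.Good q k := by
  have := S.hm5; have := S.hmn
  exact ⟨by omega, by omega, by unfold len; omega⟩

theorem creator_ev {p k : ℕ} (h : S.Good p k) : S.creator (S.f p k) = p :=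
  S.hfc p h.1 h.2.1 k

theorem ev_not_old {p k : ℕ} (h : S.Good p k) : S.f p k ∉ S.H.events :=
  S.hfH p h.1 h.2.1 k

theorem ev_inj {p k p' k' : ℕ} (h : S.Good p k) (h' : S.Good p' k')
    (he : S.f p k = S.f p' k') : p = p' ∧ k = k' := by
  have hc : p = p' := by
    have h1 := S.creator_ev h; have h2 := S.creator_ev h'
    rw [he, h2] at h1; omega
  subst hc
  exact ⟨rfl, S.hfi p h.1 h.2.1 he⟩

theorem mem_newEvents {e : E} : e ∈ S.newEvents ↔ ∃ p k, S.Good p k ∧ S.f p k = e := by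
  unfold newEvents
  simp only [Finset.mem_biUnion, Finset.mem_Icc, Finset.mem_image, Finset.mem_range]
  constructor
  · rintro ⟨p, ⟨h1, h2⟩, k, hk, he⟩; exact ⟨p, k, ⟨h1, h2, hk⟩, he⟩
  · rintro ⟨p, k, ⟨h1, h2, hk⟩, he⟩; exact ⟨p, ⟨h1, h2⟩, k, hk, he⟩

theorem ev_mem_new {p k : ℕ} (h : S.Good p k) : S.f p k ∈ S.newEvents :=
  S.mem_newEvents.2 ⟨p, k, h, rfl⟩

theorem old_not_new {e : E} (h : e ∈ S.H.events) : e ∉ S.newEvents := by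
  rw [S.mem_newEvents]; rintro ⟨p, k, hg, rfl⟩; exact S.ev_not_old hg h

theorem kOf_ev {p k : ℕ} (h : S.Good p k) : S.kOf (S.f p k) = k := by
  unfold kOf
  rw [dif_pos ⟨k, by rw [S.creator_ev h]⟩]
  rw [Nat.find_eq_iff]
  refine ⟨by rw [S.creator_ev h], fun j hj hje => ?_⟩
  rw [S.creator_ev h] at hje
  exact absurd (S.hfi p h.1 h.2.1 hje) (by omega)

/-! ### parent rewriting -/

theorem sp'_old {e : E} (h : e ∈ S.H.events) : S.sp' e = S.H.selfParent e := by
  unfold sp'; rw [if_neg (S.old_not_new h)]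

theorem op'_old {e : E} (h : e ∈ S.H.events) : S.op' e = S.H.otherParent e := by
  unfold op'; rw [if_neg (S.old_not_new h)]

theorem rnd_old {e : E} (h : e ∈ S.H.events) : S.rnd e = S.H.round e := by
  unfold rnd; rw [if_neg (S.old_not_new h)]

theorem sp'_ev {p k : ℕ} (h : S.Good p k) : S.sp' (S.f p k) = some (S.spTgt p k) := by
  unfold sp'; rw [if_pos (S.ev_mem_new h), S.creator_ev h, S.kOf_ev h]

theorem op'_ev {p k : ℕ} (h : S.Good p k) : S.op' (S.f p k) = some (S.opTgt p k) := by
  unfold op'; rw [if_pos (S.ev_mem_new h), S.creator_ev h, S.kOf_ev h]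

theorem rnd_ev {p k : ℕ} (h : S.Good p k) :
    S.rnd (S.f p k) = if k = S.top p then S.r + 1 else S.r := by
  unfold rnd top; rw [if_pos (S.ev_mem_new h), S.creator_ev h, S.kOf_ev h]

theorem rnd_ev_top {p : ℕ} (h : S.Good p (S.top p)) :
    S.rnd (S.f p (S.top p)) = S.r + 1 := by rw [S.rnd_ev h, if_pos rfl]

theorem rnd_ev_mid {p k : ℕ} (h : S.Good p k) (hk : k ≠ S.top p) :
    S.rnd (S.f p k) = S.r := by rw [S.rnd_ev h, if_neg hk]

theorem rnd_w {p : ℕ} (h1 : 1 ≤ p) (h2 : p ≤ S.n) : S.rnd (S.w p) = S.r := by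
  rw [S.rnd_old (S.hw p h1 h2).1]; exact (S.hw p h1 h2).2.2.1

/-! ### ancestry in H -/

theorem ancH_mem {e z : E} (he : e ∈ S.H.events) (h : S.H.Ancestor z e) :
    z ∈ S.H.events := by
  induction h with
  | refl => exact he
  | tail _ hp ih =>
    rcases hp with hp | hp
    · exact S.hH.selfParent_mem _ ih _ hp
    · exact S.hH.otherParent_mem _ ih _ hp

theorem anc_of_H {e z : E} (he : e ∈ S.H.events) (h : S.H.Ancestor z e) : S.Anc z e := by
  induction h with
  | refl => exact Relation.ReflTransGen.refl
  | tail hb hp ih =>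
    have hbm := S.ancH_mem he hb
    refine Relation.ReflTransGen.tail ih ?_
    rcases hp with hp | hp
    · exact Or.inl (by rw [S.sp'_old hbm]; exact hp)
    · exact Or.inr (by rw [S.op'_old hbm]; exact hp)

theorem anc_to_H {e z : E} (he : e ∈ S.H.events) (h : S.Anc z e) :
    S.H.Ancestor z e ∧ z ∈ S.H.events := by
  induction h with
  | refl => exact ⟨Relation.ReflTransGen.refl, he⟩
  | @tail b z' hb hp ih =>
    have hp' : S.H.Parent b z' := by
      rcases hp with hp | hp
      · rw [S.sp'_old ih.2] at hp; exact Or.inl hp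
      · rw [S.op'_old ih.2] at hp; exact Or.inr hp
    refine ⟨Relation.ReflTransGen.tail ih.1 hp', ?_⟩
    rcases hp' with hp' | hp'
    · exact S.hH.selfParent_mem _ ih.2 _ hp'
    · exact S.hH.otherParent_mem _ ih.2 _ hp'

/-! ### chains -/

theorem anc_chain {p : ℕ} {j k : ℕ} (h : S.Good p k) (hj : j ≤ k) :
    S.Anc (S.f p j) (S.f p k) := by
  induction k with
  | zero => cases Nat.le_zero.1 hj; exact Relation.ReflTransGen.refl
  | succ k ih =>
    rcases Nat.lt_or_ge j (k+1) with hlt | hge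
    · have hgk : S.Good p k := ⟨h.1, h.2.1, by have := h.2.2; omega⟩
      refine Relation.ReflTransGen.head ?_ (ih hgk (by omega))
      left
      rw [S.sp'_ev h]
      unfold spTgt
      rw [if_neg (by omega)]
      norm_num
    · have hjk : j = k+1 := by omega
      cases hjk; exact Relation.ReflTransGen.refl

theorem anc_base {p k : ℕ} (h : S.Good p k) : S.Anc (S.w p) (S.f p k) := by
  have h0 : S.Good p 0 := ⟨h.1, h.2.1, by have := h.2.2; omega⟩
  refine Relation.ReflTransGen.trans (S.anc_chain h (Nat.zero_le k)) ?_
  exact Relation.ReflTransGen.single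
    (Or.inl (by rw [S.sp'_ev h0]; unfold spTgt; rw [if_pos rfl]))

theorem anc_gossip_edge {p i : ℕ} (h : S.Good p i) (hi : i < S.m - 1) :
    S.Anc (S.w (S.aq p i)) (S.f p i) :=
  Relation.ReflTransGen.single
    (Or.inr (by rw [S.op'_ev h]; unfold opTgt; rw [if_pos hi]))

theorem anc_gossip {q u : ℕ} (hq2 : 2 ≤ q) (hqm : q ≤ S.m + 1) (hu2 : 2 ≤ u)
    (hum : u ≤ S.m + 1) : S.Anc (S.w u) (S.f q (S.m - 2)) := by
  have hm5 := S.hm5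
  have hg : S.Good q (S.m - 2) := S.good_T hq2 hqm (by omega)
  rcases eq_or_ne u q with rfl | hne
  · exact S.anc_base hg
  · obtain ⟨i, hi, haq⟩ := S.aq_surj hq2 hqm hu2 hum hne
    have hgi : S.Good q i := S.good_T hq2 hqm (by omega)
    exact Relation.ReflTransGen.trans (S.anc_chain hg hi)
      (haq ▸ S.anc_gossip_edge hgi (by omega))

theorem good_of_aq {p i : ℕ} (hi : i ≤ S.m - 2) {k : ℕ} (hk : k ≤ 2 * (S.m - 1) - 1) :
    S.Good (S.aq p i) k := by
  obtain ⟨h1, h2⟩ := S.aq_mem (p := p) hi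
  exact S.good_T h1 h2 hk

theorem agg_idx {p i : ℕ} (hi : i ≤ S.m - 2) :
    S.m - 1 + S.xf p + i < S.len p ∧
    ¬ (S.m - 1 + S.xf p + i < S.m - 1) ∧ ¬ (S.m - 1 + S.xf p + i < S.m - 1 + S.xf p) ∧
    S.m - 1 + S.xf p + i - (S.m - 1) - S.xf p = i := by
  have := S.hm5; unfold len; omega

theorem anc_c_edge {p i : ℕ} (hp : S.Good p 0) (hi : i ≤ S.m - 2) :
    S.Anc (S.f (S.aq p i) (S.m - 2)) (S.f p (S.m - 1 + S.xf p + i)) := by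
  obtain ⟨h1, h2, h3, h4⟩ := S.agg_idx (p := p) hi
  have hg : S.Good p (S.m - 1 + S.xf p + i) := ⟨hp.1, hp.2.1, h1⟩
  refine Relation.ReflTransGen.single (Or.inr ?_)
  rw [S.op'_ev hg]; unfold opTgt; rw [if_neg h2, if_neg h3, h4]

theorem anc_c_top {p i : ℕ} (hp : S.Good p 0) (hi : i ≤ S.m - 2) :
    S.Anc (S.f (S.aq p i) (S.m - 2)) (S.f p (S.top p)) := by
  have := S.hm5
  have htop : S.Good p (S.top p) := ⟨hp.1, hp.2.1, S.top_lt_len p⟩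
  refine Relation.ReflTransGen.trans
    (S.anc_chain htop (show S.m - 1 + S.xf p + i ≤ S.top p by unfold top len; omega))
    (S.anc_c_edge hp hi)

theorem anc_w_top {p u : ℕ} (hp : S.Good p 0) (hu2 : 2 ≤ u) (hum : u ≤ S.m + 1) :
    S.Anc (S.w u) (S.f p (S.top p)) := by
  have hm5 := S.hm5
  refine Relation.ReflTransGen.trans (S.anc_c_top hp (Nat.zero_le _)) ?_
  obtain ⟨h1, h2⟩ := S.aq_mem (p := p) (i := 0) (by omega)
  exact S.anc_gossip h1 h2 hu2 hum

theorem anc_x_top {p : ℕ} (hp : S.Good p 0) (hA : p ∈ S.A) :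
    S.Anc S.x (S.f p (S.top p)) := by
  have hm5 := S.hm5
  have htop : S.Good p (S.top p) := ⟨hp.1, hp.2.1, S.top_lt_len p⟩
  rcases eq_or_ne p 1 with rfl | hne
  · exact S.hwx ▸ S.anc_base htop
  · have hxf : S.xf p = 1 := by unfold xf; rw [if_pos ⟨hA, hne⟩]
    have hg : S.Good p (S.m - 1) := ⟨hp.1, hp.2.1, by unfold len; omega⟩
    refine Relation.ReflTransGen.trans
      (S.anc_chain htop (show S.m - 1 ≤ S.top p by unfold top len; omega)) ?_
    refine Relation.ReflTransGen.single (Or.inr ?_)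
    rw [S.op'_ev hg]; unfold opTgt
    rw [if_neg (by omega), if_pos (by omega)]

end Setup
end Adv

namespace Adv
namespace Setup
open Hashgraph

variable {E : Type} [DecidableEq E] (S : Setup E)

set_option linter.unusedSectionVars false

def WSk (p k : ℕ) : Finset ℕ :=
  insert p (S.T ∪ (if p ∈ S.A ∧ p ≠ 1 ∧ S.m - 1 ≤ k then {1} else ∅))

def Qs (p k : ℕ) : Finset ℕ :=
  if k < S.m - 1 + S.xf p then ∅
  else (Finset.range (k - (S.m - 1) - S.xf p + 1)).image (S.aq p)

def Inv (p k : ℕ) (z : E) : Prop :=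
  (∃ j ≤ k, z = S.f p j) ∨ (∃ q ∈ S.Qs p k, ∃ j ≤ S.m - 2, z = S.f q j) ∨
  (z ∈ S.H.events ∧ ∃ u ∈ S.WSk p k, S.H.Ancestor z (S.w u))

theorem WSk_bound {p k u : ℕ} (hp : S.Good p k) (hu : u ∈ S.WSk p k) :
    1 ≤ u ∧ u ≤ S.n := by
  have := S.hmn
  unfold WSk T at hu
  simp only [Finset.mem_insert, Finset.mem_union, Finset.mem_Icc] at hu
  rcases hu with rfl | hu | hu
  · exact ⟨hp.1, hp.2.1⟩
  · omega
  · split at hu <;> simp at hu; omega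

theorem Qs_mem {p k q : ℕ} (hk : k < S.len p) (hq : q ∈ S.Qs p k) :
    (2 ≤ q ∧ q ≤ S.m + 1) ∧ q ≠ p ∧ ∃ i ≤ S.m - 2, S.aq p i = q := by
  unfold Qs at hq
  split at hq
  · simp at hq
  · simp only [Finset.mem_image, Finset.mem_range] at hq
    obtain ⟨i, hi, rfl⟩ := hq
    have hi2 : i ≤ S.m - 2 := by
      have := S.hm5; unfold len at hk; omega
    exact ⟨S.aq_mem hi2, S.aq_ne, i, hi2, rfl⟩

theorem Qs_mem_of {p k i : ℕ} (hge : S.m - 1 + S.xf p ≤ k) (hik : S.m - 1 + S.xf p + i ≤ k) :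
    S.aq p i ∈ S.Qs p k := by
  unfold Qs
  rw [if_neg (by omega)]
  exact Finset.mem_image.2 ⟨i, Finset.mem_range.2 (by omega), rfl⟩

theorem inv_mono {p k k' : ℕ} {z : E} (hk : k ≤ k') (h : S.Inv p k z) : S.Inv p k' z := by
  have hQ : S.Qs p k ⊆ S.Qs p k' := by
    intro q hq
    unfold Qs at hq ⊢
    split at hq
    · simp at hq
    · rw [if_neg (by omega)]
      simp only [Finset.mem_image, Finset.mem_range] at hq ⊢
      obtain ⟨i, hi, rfl⟩ := hq; exact ⟨i, by omega, rfl⟩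
  have hW : S.WSk p k ⊆ S.WSk p k' := by
    unfold WSk
    intro u hu
    simp only [Finset.mem_insert, Finset.mem_union] at hu ⊢
    rcases hu with h | h | h
    · exact Or.inl h
    · exact Or.inr (Or.inl h)
    · refine Or.inr (Or.inr ?_)
      split at h
      · rename_i hc; rw [if_pos ⟨hc.1, hc.2.1, by omega⟩]; exact h
      · simp at h
  rcases h with ⟨j, hj, rfl⟩ | ⟨q, hq, j, hj, rfl⟩ | ⟨hz, u, hu, ha⟩
  · exact Or.inl ⟨j, by omega, rfl⟩
  · exact Or.inr (Or.inl ⟨q, hQ hq, j, hj, rfl⟩)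
  · exact Or.inr (Or.inr ⟨hz, u, hW hu, ha⟩)

theorem inv_step {p k : ℕ} {b z : E} (hg : S.Good p k) (hb : S.Inv p k b)
    (hp : S.Par b z) : S.Inv p k z := by
  have hm5 := S.hm5
  rcases hb with ⟨j, hj, rfl⟩ | ⟨q, hq, j, hj, rfl⟩ | ⟨hbm, u, hu, ha⟩
  · -- chain clause
    have hgj : S.Good p j := ⟨hg.1, hg.2.1, by have := hg.2.2; omega⟩
    rcases hp with hp | hp
    · rw [S.sp'_ev hgj] at hp
      injection hp with hp; subst hp
      unfold spTgt
      split
      · -- z = w p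
        refine Or.inr (Or.inr ⟨(S.hw p hg.1 hg.2.1).1, p, ?_, Relation.ReflTransGen.refl⟩)
        exact Finset.mem_insert_self _ _
      · exact Or.inl ⟨j - 1, by omega, rfl⟩
    · rw [S.op'_ev hgj] at hp
      injection hp with hp; subst hp
      unfold opTgt
      split
      · -- gossip pull : w (aq p j)
        rename_i hjm
        refine Or.inr (Or.inr ⟨(S.hw _ ?_ ?_).1, S.aq p j, ?_, Relation.ReflTransGen.refl⟩)
        · have := S.aq_mem (p := p) (i := j) (by omega); omega
        · have := S.aq_mem (p := p) (i := j) (by omega); have := S.hmn; omega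
        · unfold WSk
          have := S.aq_mem (p := p) (i := j) (by omega)
          exact Finset.mem_insert_of_mem (Finset.mem_union_left _
            (Finset.mem_Icc.2 (by omega)))
      · split
        · -- x pull
          rename_i h1 h2
          have hpA : p ∈ S.A ∧ p ≠ 1 := by
            by_contra hc
            unfold xf at h2; rw [if_neg hc] at h2; omega
          have hk1 : S.m - 1 ≤ k := by omega
          refine Or.inr (Or.inr ⟨?_, 1, ?_, ?_⟩)
          · rw [← S.hwx]; exact (S.hw 1 le_rfl (by have := S.hn; omega)).1
          · unfold WSk
            refine Finset.mem_insert_of_mem (Finset.mem_union_right _ ?_)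
            rw [if_pos ⟨hpA.1, hpA.2, hk1⟩]
            exact Finset.mem_singleton_self 1
          · rw [← S.hwx]; exact Relation.ReflTransGen.refl
        · -- c pull
          rename_i h1 h2
          refine Or.inr (Or.inl ⟨S.aq p (j - (S.m - 1) - S.xf p), ?_, S.m - 2, le_rfl, rfl⟩)
          have hj1 : S.m - 1 + S.xf p ≤ j := by omega
          exact S.Qs_mem_of (by omega) (by omega)
  · -- gossip clause
    obtain ⟨⟨hq2, hqm⟩, hqp, -⟩ := S.Qs_mem hg.2.2 hq
    have hgj : S.Good q j := S.good_T hq2 hqm (by omega)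
    rcases hp with hp | hp
    · rw [S.sp'_ev hgj] at hp
      injection hp with hp; subst hp
      unfold spTgt
      split
      · refine Or.inr (Or.inr ⟨(S.hw q ?_ ?_).1, q, ?_, Relation.ReflTransGen.refl⟩)
        · omega
        · have := S.hmn; omega
        · exact Finset.mem_insert_of_mem (Finset.mem_union_left _
            (Finset.mem_Icc.2 (by omega)))
      · exact Or.inr (Or.inl ⟨q, hq, j - 1, by omega, rfl⟩)
    · rw [S.op'_ev hgj] at hp
      injection hp with hp; subst hp
      unfold opTgt
      rw [if_pos (by omega)]
      refine Or.inr (Or.inr ⟨(S.hw _ ?_ ?_).1, S.aq q j, ?_, Relation.ReflTransGen.refl⟩)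
      · have := S.aq_mem (p := q) (i := j) (by omega); omega
      · have := S.aq_mem (p := q) (i := j) (by omega); have := S.hmn; omega
      · have := S.aq_mem (p := q) (i := j) (by omega)
        exact Finset.mem_insert_of_mem (Finset.mem_union_left _
          (Finset.mem_Icc.2 (by omega)))
  · -- old clause
    have hp' : S.H.Parent b z := by
      rcases hp with hp | hp
      · rw [S.sp'_old hbm] at hp; exact Or.inl hp
      · rw [S.op'_old hbm] at hp; exact Or.inr hp
    have hzm : z ∈ S.H.events := by
      rcases hp' with hp' | hp'
      · exact S.hH.selfParent_mem _ hbm _ hp'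
      · exact S.hH.otherParent_mem _ hbm _ hp'
    exact Or.inr (Or.inr ⟨hzm, u, hu, Relation.ReflTransGen.tail ha hp'⟩)

theorem ML {p k : ℕ} {z : E} (hg : S.Good p k) (h : S.Anc z (S.f p k)) :
    S.Inv p k z := by
  induction h with
  | refl => exact Or.inl ⟨k, le_rfl, rfl⟩
  | tail hb hp ih => exact S.inv_step hg ih hp

end Setup
end Adv

namespace Adv
namespace Setup
open Hashgraph

variable {E : Type} [DecidableEq E] (S : Setup E)

set_option linter.unusedSectionVars false

theorem mem_ev' {e : E} :
    e ∈ S.ev' ↔ e ∈ S.H.events ∨ ∃ p k, S.Good p k ∧ S.f p k = e := by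
  unfold ev'
  rw [Finset.mem_union, S.mem_newEvents]

theorem old_mem_ev' {e : E} (h : e ∈ S.H.events) : e ∈ S.ev' := S.mem_ev'.2 (Or.inl h)

theorem new_mem_ev' {p k : ℕ} (h : S.Good p k) : S.f p k ∈ S.ev' :=
  S.mem_ev'.2 (Or.inr ⟨p, k, h, rfl⟩)

theorem anc_new_decomp {p k : ℕ} {z : E} (hg : S.Good p k) (h : S.Anc z (S.f p k))
    (hz : z ∉ S.H.events) :
    (∃ j ≤ k, z = S.f p j) ∨ (∃ q ∈ S.Qs p k, ∃ j ≤ S.m - 2, z = S.f q j) := by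
  rcases S.ML hg h with h | h | h
  · exact Or.inl h
  · exact Or.inr h
  · exact absurd h.1 hz

theorem anc_old_decomp {p k : ℕ} {z : E} (hg : S.Good p k) (h : S.Anc z (S.f p k))
    (hz : z ∈ S.H.events) : ∃ u ∈ S.WSk p k, S.H.Ancestor z (S.w u) := by
  rcases S.ML hg h with ⟨j, hj, rfl⟩ | ⟨q, hq, j, hj, rfl⟩ | h
  · exact absurd hz (S.ev_not_old ⟨hg.1, hg.2.1, by have := hg.2.2; omega⟩)
  · obtain ⟨⟨h2, hm⟩, -, -⟩ := S.Qs_mem hg.2.2 hq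
    exact absurd hz (S.ev_not_old (S.good_T h2 hm (by have := S.hm5; omega)))
  · exact h.2

theorem anc_wit_old {p k : ℕ} {w' : E} (hg : S.Good p k) (hw' : w' ∈ S.H.events)
    (hww : S.H.Witness w') (hwr : S.H.round w' = S.r) (h : S.Anc w' (S.f p k)) :
    ∃ u ∈ S.WSk p k, w' = S.w u := by
  obtain ⟨u, hu, ha⟩ := S.anc_old_decomp hg h hw'
  obtain ⟨hu1, hu2⟩ := S.WSk_bound hg hu
  obtain ⟨hwm, hwwit, hwrnd, -⟩ := S.hw u hu1 hu2
  exact ⟨u, hu, S.hnoanc w' hw' hww hwr (S.w u) hwm hwwit hwrnd ha⟩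

theorem interval_old {p k : ℕ} {w' z : E} (hg : S.Good p k) (hw' : w' ∈ S.H.events)
    (hww : S.H.Witness w') (hwr : S.H.round w' = S.r) (hz : z ∈ S.H.events)
    (h1 : S.Anc w' z) (h2 : S.Anc z (S.f p k)) : z = w' := by
  obtain ⟨u, hu, ha⟩ := S.anc_old_decomp hg h2 hz
  obtain ⟨hu1, hu2⟩ := S.WSk_bound hg hu
  obtain ⟨hwm, hwwit, hwrnd, -⟩ := S.hw u hu1 hu2
  have h1' := (S.anc_to_H hz h1).1
  have hwu : w' = S.w u :=
    S.hnoanc w' hw' hww hwr (S.w u) hwm hwwit hwrnd (ha.trans h1')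
  exact S.hH.acyclic z hz w' hw' (hwu ▸ ha) h1'

theorem anc_mem_ev' {e z : E} (he : e ∈ S.ev') (h : S.Anc z e) : z ∈ S.ev' := by
  rcases S.mem_ev'.1 he with he | ⟨p, k, hg, rfl⟩
  · exact S.old_mem_ev' (S.anc_to_H he h).2
  · rcases S.ML hg h with ⟨j, hj, rfl⟩ | ⟨q, hq, j, hj, rfl⟩ | hh
    · exact S.new_mem_ev' ⟨hg.1, hg.2.1, by have := hg.2.2; omega⟩
    · obtain ⟨⟨h2, hm⟩, -, -⟩ := S.Qs_mem hg.2.2 hq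
      exact S.new_mem_ev' (S.good_T h2 hm (by have := S.hm5; omega))
    · exact S.old_mem_ev' hh.1

theorem anc_eq : S.H'.Ancestor = S.Anc := rfl

theorem forkfree' : ForkFree S.creator S.H' := by
  have key : ∀ a ∈ S.H.events, ∀ p k, S.Good p k → S.creator a = p →
      S.Anc a (S.f p k) := by
    intro a ha p k hg hc
    obtain ⟨hwm, hwwit, hwrnd, hwc⟩ := S.hw p hg.1 hg.2.1
    rcases S.hff a ha (S.w p) hwm (by rw [hc, hwc]) with h | h
    · exact (S.anc_base hg).trans (S.anc_of_H hwm h)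
    · have : a = S.w p := S.htop (S.w p) hwm hwwit hwrnd a ha (hc.trans hwc.symm) h
      exact this ▸ S.anc_base hg
  intro a ha b hb hc
  rw [anc_eq]
  rcases S.mem_ev'.1 ha with ha' | ⟨p, k, hg, rfl⟩ <;>
    rcases S.mem_ev'.1 hb with hb' | ⟨p', k', hg', rfl⟩
  · rcases S.hff a ha' b hb' hc with h | h
    · exact Or.inl (S.anc_of_H hb' h)
    · exact Or.inr (S.anc_of_H ha' h)
  · exact Or.inl (key a ha' p' k' hg' (by rw [hc, S.creator_ev hg']))
  · exact Or.inr (key b hb' p k hg (by rw [← hc, S.creator_ev hg]))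
  · have hpp : p = p' := by
      have h1 := S.creator_ev hg; have h2 := S.creator_ev hg'
      rw [h1, h2] at hc; exact hc
    subst hpp
    rcases Nat.le_total k k' with h | h
    · exact Or.inl (S.anc_chain hg' h)
    · exact Or.inr (S.anc_chain hg h)

theorem noObs {e : E} (he : e ∈ S.ev') (pp : ℕ) :
    ¬ ObservesForkFrom S.creator S.H' e pp := by
  rintro ⟨z, z', hz, hz', hc, hc', hcc, hf1, hf2⟩
  rw [anc_eq] at hz hz'
  have hzm := S.anc_mem_ev' he hz
  have hzm' := S.anc_mem_ev' he hz'
  rcases S.forkfree' z hzm z' hzm' (by rw [hc, hc']) with h | h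
  · exact hf1 h
  · exact hf2 h

theorem sees_iff {e z : E} (he : e ∈ S.ev') :
    Sees S.creator S.H' e z ↔ S.Anc z e := by
  unfold Sees
  rw [anc_eq]
  exact ⟨fun h => h.1, fun h => ⟨h, S.noObs he _⟩⟩

theorem noObsH {e : E} (he : e ∈ S.H.events) (pp : ℕ) :
    ¬ ObservesForkFrom S.creator S.H e pp := by
  rintro ⟨z, z', hz, hz', hc, hc', hcc, hf1, hf2⟩
  have hzm := S.ancH_mem he hz
  have hzm' := S.ancH_mem he hz'
  rcases S.hff z hzm z' hzm' (by rw [hc, hc']) with h | h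
  · exact hf1 h
  · exact hf2 h

theorem seesH_iff {e z : E} (he : e ∈ S.H.events) :
    Sees S.creator S.H e z ↔ S.H.Ancestor z e :=
  ⟨fun h => h.1, fun h => ⟨h, S.noObsH he _⟩⟩

end Setup
end Adv

namespace Adv
namespace Setup
open Hashgraph

variable {E : Type} [DecidableEq E] (S : Setup E)

set_option linter.unusedSectionVars false

theorem H'_events : S.H'.events = S.ev' := rfl
theorem H'_sp : S.H'.selfParent = S.sp' := rfl
theorem H'_op : S.H'.otherParent = S.op' := rfl
theorem H'_round : S.H'.round = S.rnd := rfl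
theorem H'_vote : S.H'.vote = S.vote' := rfl

theorem wit_old {e : E} (he : e ∈ S.H.events) :
    (S.H'.Witness e ↔ S.H.Witness e) := by
  unfold Hashgraph.Witness
  rw [H'_events, H'_sp, H'_round, S.sp'_old he]
  constructor
  · rintro ⟨-, h⟩
    refine ⟨he, fun y hy => ?_⟩
    have hym := S.hH.selfParent_mem _ he _ hy
    have := h y hy
    rwa [S.rnd_old hym, S.rnd_old he] at this
  · rintro ⟨-, h⟩
    refine ⟨S.old_mem_ev' he, fun y hy => ?_⟩
    have hym := S.hH.selfParent_mem _ he _ hy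
    rw [S.rnd_old hym, S.rnd_old he]
    exact h y hy

theorem rnd_spTgt {p k : ℕ} (hg : S.Good p k) : S.rnd (S.spTgt p k) = S.r := by
  unfold spTgt
  split
  · exact S.rnd_w hg.1 hg.2.1
  · refine S.rnd_ev_mid ⟨hg.1, hg.2.1, by have := hg.2.2; omega⟩ ?_
    unfold top
    have := hg.2.2
    rename_i h
    omega

theorem wit_new {p k : ℕ} (hg : S.Good p k) :
    (S.H'.Witness (S.f p k) ↔ k = S.top p) := by
  unfold Hashgraph.Witness
  rw [H'_events, H'_sp, H'_round, S.sp'_ev hg]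
  constructor
  · rintro ⟨-, h⟩
    have := h _ rfl
    rw [S.rnd_spTgt hg, S.rnd_ev hg] at this
    by_contra hne
    rw [if_neg hne] at this
    omega
  · intro hk
    refine ⟨S.new_mem_ev' hg, fun y hy => ?_⟩
    injection hy with hy
    subst hy
    rw [S.rnd_spTgt hg, S.rnd_ev hg, if_pos hk]
    omega

theorem wit_r1 {e : E} (he : e ∈ S.ev') (hw : S.H'.Witness e) (hr : S.rnd e = S.r + 1) :
    ∃ p, S.Good p (S.top p) ∧ e = S.f p (S.top p) := by
  rcases S.mem_ev'.1 he with he' | ⟨p, k, hg, rfl⟩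
  · rw [S.rnd_old he'] at hr
    have := S.hmax e he'
    omega
  · rcases eq_or_ne k (S.top p) with rfl | hne
    · exact ⟨p, hg, rfl⟩
    · rw [S.rnd_ev_mid hg hne] at hr; omega

theorem wit_r {e : E} (he : e ∈ S.ev') (hw : S.H'.Witness e) (hr : S.rnd e = S.r) :
    e ∈ S.H.events ∧ 1 ≤ S.creator e ∧ S.creator e ≤ S.n ∧ e = S.w (S.creator e) := by
  rcases S.mem_ev'.1 he with he' | ⟨p, k, hg, rfl⟩
  · rw [S.rnd_old he'] at hr
    have hwH := (S.wit_old he').1 hw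
    obtain ⟨h1, h2⟩ := S.hH.creator_mem e he'
    exact ⟨he', h1, h2, S.hwu _ h1 h2 e he' hwH hr rfl⟩
  · have := (S.wit_new hg).1 hw
    rw [this, S.rnd_ev_top ⟨hg.1, hg.2.1, this ▸ hg.2.2⟩] at hr
    omega

theorem rnd_opTgt {p k : ℕ} (hg : S.Good p k) : S.rnd (S.opTgt p k) = S.r := by
  have hm5 := S.hm5
  unfold opTgt
  split
  · exact S.rnd_w (by have := S.aq_mem (p := p) (i := k) (by omega); omega)
      (by have := S.aq_mem (p := p) (i := k) (by omega); have := S.hmn; omega)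
  · split
    · rw [← S.hwx]; exact S.rnd_w le_rfl (by have := S.hn; omega)
    · rename_i h1 h2
      have hj : k - (S.m - 1) - S.xf p ≤ S.m - 2 := by
        have := hg.2.2; unfold len at this; omega
      refine S.rnd_ev_mid (S.good_of_aq hj (by omega)) ?_
      obtain ⟨ha1, ha2⟩ := S.aq_mem (p := p) hj
      unfold top len xf
      split <;> omega

theorem maxPR {p k : ℕ} (hg : S.Good p k) :
    S.H'.maxParentRound (S.f p k) = S.r := by
  unfold Hashgraph.maxParentRound
  rw [H'_sp, H'_op, H'_round, S.sp'_ev hg, S.op'_ev hg]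
  simp only [S.rnd_spTgt hg, S.rnd_opTgt hg, max_self]

/-! ### positive promotion -/

def cOf (p i : ℕ) : E := S.f (S.aq p i) (S.m - 2)

def Spos (p : ℕ) : Finset E :=
  insert (S.f p (S.top p)) ((Finset.range (S.m - 1)).image (S.cOf p))

theorem Spos_spec {p : ℕ} (hg : S.Good p (S.top p)) :
    (↑(S.Spos p) : Set E) ⊆ ↑S.ev' ∧
    (∀ z ∈ S.Spos p, S.Anc z (S.f p (S.top p)) ∧ ∀ u, 2 ≤ u → u ≤ S.m + 1 →
      S.Anc (S.w u) z) ∧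
    Set.InjOn S.creator ↑(S.Spos p) ∧ S.m ≤ (S.Spos p).card := by
  have hm5 := S.hm5
  have hg0 : S.Good p 0 := ⟨hg.1, hg.2.1, by have := hg.2.2; omega⟩
  have hmem : ∀ z ∈ S.Spos p, z = S.f p (S.top p) ∨
      ∃ i ≤ S.m - 2, z = S.cOf p i := by
    intro z hz
    rcases Finset.mem_insert.1 hz with h | h
    · exact Or.inl h
    · obtain ⟨i, hi, rfl⟩ := Finset.mem_image.1 h
      exact Or.inr ⟨i, by have := Finset.mem_range.1 hi; omega, rfl⟩
  have hgood : ∀ i ≤ S.m - 2, S.Good (S.aq p i) (S.m - 2) :=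
    fun i hi => S.good_of_aq hi (by omega)
  have hcr : ∀ i ≤ S.m - 2, S.creator (S.cOf p i) = S.aq p i :=
    fun i hi => S.creator_ev (hgood i hi)
  refine ⟨?_, ?_, ?_, ?_⟩
  · intro z hz
    rcases hmem z hz with rfl | ⟨i, hi, rfl⟩
    · exact S.new_mem_ev' hg
    · exact S.new_mem_ev' (hgood i hi)
  · intro z hz
    rcases hmem z hz with rfl | ⟨i, hi, rfl⟩
    · exact ⟨Relation.ReflTransGen.refl, fun u h2 hm => S.anc_w_top hg0 h2 hm⟩
    · refine ⟨S.anc_c_top hg0 hi, fun u h2 hm => ?_⟩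
      obtain ⟨ha1, ha2⟩ := S.aq_mem (p := p) hi
      exact S.anc_gossip ha1 ha2 h2 hm
  · intro a ha b hb hab
    obtain ha' := hmem a (Finset.mem_coe.1 ha)
    obtain hb' := hmem b (Finset.mem_coe.1 hb)
    clear ha hb
    rcases ha' with rfl | ⟨i, hi, rfl⟩ <;> rcases hb' with rfl | ⟨i', hi', rfl⟩
    · rfl
    · exfalso
      rw [S.creator_ev hg, hcr i' (by omega)] at hab
      exact S.aq_ne hab.symm
    · exfalso
      rw [S.creator_ev hg, hcr i (by omega)] at hab
      exact S.aq_ne hab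
    · rw [hcr i (by omega), hcr i' (by omega)] at hab
      rw [S.aq_inj hab]
  · have hinj : Set.InjOn (S.cOf p) ↑(Finset.range (S.m - 1)) := by
      intro i hi i' hi' h
      simp only [Finset.coe_range, Set.mem_Iio] at hi hi'
      have := congrArg S.creator h
      rw [hcr i (by omega), hcr i' (by omega)] at this
      exact S.aq_inj this
    have h1 : ((Finset.range (S.m - 1)).image (S.cOf p)).card = S.m - 1 := by
      rw [Finset.card_image_of_injOn hinj, Finset.card_range]
    have h2 : S.f p (S.top p) ∉ (Finset.range (S.m - 1)).image (S.cOf p) := by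
      intro h
      obtain ⟨i, hi, he⟩ := Finset.mem_image.1 h
      have := congrArg S.creator he
      rw [hcr i (by have := Finset.mem_range.1 hi; omega), S.creator_ev hg] at this
      exact S.aq_ne this
    unfold Spos
    rw [Finset.card_insert_of_notMem h2, h1]
    omega

theorem ss_top {p u : ℕ} (hg : S.Good p (S.top p)) (h2 : 2 ≤ u) (hm : u ≤ S.m + 1) :
    StronglySees S.creator S.n S.H' (S.f p (S.top p)) (S.w u) := by
  obtain ⟨hsub, hprop, hinj, hcard⟩ := S.Spos_spec hg
  refine ⟨S.Spos p, hsub, fun z hz => ?_, hinj, by have := S.hm3; omega⟩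
  have hzev : z ∈ S.ev' := hsub hz
  refine ⟨(S.sees_iff (S.new_mem_ev' hg)).2 (hprop z hz).1,
    (S.sees_iff hzev).2 ((hprop z hz).2 u h2 hm)⟩

theorem WWf_card : (S.WWf).card = S.m := by
  have := S.hmn
  have : Set.InjOn S.w ↑S.T := by
    intro a ha b hb h
    simp only [T, Finset.coe_Icc, Set.mem_Icc] at ha hb
    have h1 := (S.hw a (by omega) (by omega)).2.2.2
    have h2 := (S.hw b (by omega) (by omega)).2.2.2
    rw [← h1, ← h2, h]
  rw [WWf, Finset.card_image_of_injOn this, T, Nat.card_Icc]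
  omega

theorem promoted_top {p : ℕ} (hg : S.Good p (S.top p)) :
    PromotedAt S.creator S.n S.H' (S.f p (S.top p)) S.r := by
  have := S.hmn
  refine ⟨S.WWf, ?_, ?_, ?_, ?_⟩
  · intro z hz
    simp only [WWf, Finset.coe_image, Set.mem_image, Finset.mem_coe] at hz
    obtain ⟨u, hu, rfl⟩ := hz
    simp only [T, Finset.mem_Icc] at hu
    exact S.old_mem_ev' (S.hw u (by omega) (by omega)).1
  · intro z hz
    obtain ⟨u, hu, rfl⟩ := Finset.mem_image.1 hz
    simp only [T, Finset.mem_Icc] at hu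
    obtain ⟨hm1, hm2, hm3, -⟩ := S.hw u (by omega) (by omega)
    exact ⟨(S.wit_old hm1).2 hm2, by rw [H'_round, S.rnd_old hm1]; exact hm3,
      S.ss_top hg hu.1 hu.2⟩
  · intro a ha b hb hab
    simp only [WWf, Finset.coe_image, Set.mem_image, Finset.mem_coe] at ha hb
    obtain ⟨ua, hua, rfl⟩ := ha
    obtain ⟨ub, hub, rfl⟩ := hb
    simp only [T, Finset.mem_Icc] at hua hub
    rw [(S.hw ua (by omega) (by omega)).2.2.2, (S.hw ub (by omega) (by omega)).2.2.2] at hab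
    rw [hab]
  · rw [S.WWf_card]; have := S.hm3; omega

end Setup
end Adv

namespace Adv
namespace Setup
open Hashgraph

variable {E : Type} [DecidableEq E] (S : Setup E)

set_option linter.unusedSectionVars false

theorem card_ge_m {s : Finset E} (h : 2 * S.n < 3 * s.card) : S.m ≤ s.card := by
  have h3 : 3 * (2 * S.n / 3) + 2 * S.n % 3 = 2 * S.n := by omega
  have := Nat.mod_lt (2 * S.n) (show 0 < 3 by norm_num)
  unfold m; omega

theorem creator_w {u : ℕ} (h1 : 1 ≤ u) (h2 : u ≤ S.n) : S.creator (S.w u) = u :=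
  (S.hw u h1 h2).2.2.2

theorem WSk_T {q j u : ℕ} (hj : j ≤ S.m - 2) (hq : 2 ≤ q) (hqm : q ≤ S.m + 1)
    (hu : u ∈ S.WSk q j) : u ∈ S.T := by
  have := S.hm5
  unfold WSk at hu
  rcases Finset.mem_insert.1 hu with rfl | hu
  · exact Finset.mem_Icc.2 ⟨hq, hqm⟩
  · rcases Finset.mem_union.1 hu with hu | hu
    · exact hu
    · rw [if_neg (by push_neg; intro _ _; omega)] at hu
      simp at hu

theorem ss_classify {p k : ℕ} (hg : S.Good p k) {w' z : E} (hw'm : w' ∈ S.H.events)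
    (hww : S.H.Witness w') (hwr : S.H.round w' = S.r)
    (h1 : S.Anc w' z) (h2 : S.Anc z (S.f p k)) :
    S.creator z = S.creator w' ∨ S.creator z = p ∨
      (S.creator z ∈ S.Qs p k ∧ S.creator w' ∈ S.T) := by
  by_cases hz : z ∈ S.H.events
  · exact Or.inl (by rw [S.interval_old hg hw'm hww hwr hz h1 h2])
  · rcases S.anc_new_decomp hg h2 hz with ⟨j, hj, rfl⟩ | ⟨q, hq, j, hj, rfl⟩
    · exact Or.inr (Or.inl (S.creator_ev ⟨hg.1, hg.2.1, by have := hg.2.2; omega⟩))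
    · obtain ⟨⟨hq2, hqm⟩, hqp, -⟩ := S.Qs_mem hg.2.2 hq
      have hgq : S.Good q j := S.good_T hq2 hqm (by have := S.hm5; omega)
      obtain ⟨u, hu, hwu⟩ := S.anc_wit_old hgq hw'm hww hwr h1
      refine Or.inr (Or.inr ⟨by rw [S.creator_ev hgq]; exact hq, ?_⟩)
      obtain ⟨h1u, h2u⟩ := S.WSk_bound hgq hu
      rw [hwu, S.creator_w h1u h2u]
      exact S.WSk_T hj hq2 hqm hu

theorem ss_struct {p k : ℕ} (hg : S.Good p k) {w' : E} (hw'm : w' ∈ S.H.events)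
    (hww : S.H.Witness w') (hwr : S.H.round w' = S.r)
    (hss : StronglySees S.creator S.n S.H' (S.f p k) w') :
    S.creator w' ∈ S.T ∧ S.m ≤ (insert (S.creator w') (insert p (S.Qs p k))).card := by
  obtain ⟨S2, hsub, hprops, hinj, hcard⟩ := hss
  have hm2 : S.m ≤ S2.card := S.card_ge_m hcard
  have himg : (S2.image S.creator).card = S2.card := Finset.card_image_of_injOn hinj
  have hcl : ∀ z ∈ S2, S.creator z = S.creator w' ∨ S.creator z = p ∨
      (S.creator z ∈ S.Qs p k ∧ S.creator w' ∈ S.T) := by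
    intro z hz
    obtain ⟨hs1, hs2⟩ := hprops z hz
    exact S.ss_classify hg hw'm hww hwr hs2.1 hs1.1
  have hT : S.creator w' ∈ S.T := by
    by_contra hT
    have : S2.image S.creator ⊆ {S.creator w', p} := by
      intro u hu
      obtain ⟨z, hz, rfl⟩ := Finset.mem_image.1 hu
      rcases hcl z hz with h | h | h
      · simp [h]
      · simp [h]
      · exact absurd h.2 hT
    have := Finset.card_le_card this
    have h2 : ({S.creator w', p} : Finset ℕ).card ≤ 2 := Finset.card_insert_le _ _ |>.trans (by simp)
    have := S.hm5
    omega
  refine ⟨hT, ?_⟩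
  have hsub2 : S2.image S.creator ⊆ insert (S.creator w') (insert p (S.Qs p k)) := by
    intro u hu
    obtain ⟨z, hz, rfl⟩ := Finset.mem_image.1 hu
    rcases hcl z hz with h | h | h
    · simp [h]
    · simp [h]
    · simp [Finset.mem_insert, h.1]
  have := Finset.card_le_card hsub2
  omega

theorem Qs_card_le {p k : ℕ} (hk : k < S.top p) : (S.Qs p k).card ≤ S.m - 2 := by
  have := S.hm5
  unfold Qs
  split
  · simp
  · refine (Finset.card_image_le).trans ?_
    rw [Finset.card_range]
    unfold top len at hk
    omega

theorem Qs_sub_T {p k : ℕ} (hk : k < S.len p) : S.Qs p k ⊆ S.T := by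
  intro q hq
  obtain ⟨⟨h1, h2⟩, -, -⟩ := S.Qs_mem hk hq
  exact Finset.mem_Icc.2 ⟨h1, h2⟩

theorem p_not_Qs {p k : ℕ} (hk : k < S.len p) : p ∉ S.Qs p k := by
  intro hp
  exact (S.Qs_mem hk hp).2.1 rfl

theorem not_promoted_mid {p k : ℕ} (hg : S.Good p k) (hk : k < S.top p) :
    ¬ PromotedAt S.creator S.n S.H' (S.f p k) S.r := by
  have hm5 := S.hm5
  rintro ⟨SP, hsub, hprops, hinj, hcard⟩
  have hmSP : S.m ≤ SP.card := S.card_ge_m hcard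
  have hwit : ∀ w' ∈ SP, w' ∈ S.H.events ∧ S.H.Witness w' ∧ S.H.round w' = S.r ∧
      S.creator w' ∈ S.T ∧
      S.m ≤ (insert (S.creator w') (insert p (S.Qs p k))).card := by
    intro w' hw'
    obtain ⟨hw1, hw2, hw3⟩ := hprops w' hw'
    have hev : w' ∈ S.ev' := hw1.1
    obtain ⟨hold, -, -, -⟩ := S.wit_r hev hw1 hw2
    have hwitH := (S.wit_old hold).1 hw1
    have hrH : S.H.round w' = S.r := by rw [← S.rnd_old hold]; exact hw2
    obtain ⟨hT, hcd⟩ := S.ss_struct hg hold hwitH hrH hw3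
    exact ⟨hold, hwitH, hrH, hT, hcd⟩
  -- the creators of SP lie in T \ insert p (Qs p k)
  have hQle := S.Qs_card_le hk
  have hsubT : SP.image S.creator ⊆ S.T \ insert p (S.Qs p k) := by
    intro u hu
    obtain ⟨w', hw', rfl⟩ := Finset.mem_image.1 hu
    obtain ⟨-, -, -, hT, hcd⟩ := hwit w' hw'
    refine Finset.mem_sdiff.2 ⟨hT, fun hin => ?_⟩
    rw [Finset.insert_eq_self.2 hin] at hcd
    have h1 : (insert p (S.Qs p k)).card ≤ 1 + (S.m - 2) :=
      (Finset.card_insert_le _ _).trans (by omega)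
    omega
  have himg : (SP.image S.creator).card = SP.card := Finset.card_image_of_injOn hinj
  have hTcard : (S.T \ insert p (S.Qs p k)).card ≤ 2 := by
    have h1 : S.T \ insert p (S.Qs p k) ⊆ S.T \ S.Qs p k := by
      intro u hu
      obtain ⟨h1, h2⟩ := Finset.mem_sdiff.1 hu
      exact Finset.mem_sdiff.2 ⟨h1, fun hq => h2 (Finset.mem_insert_of_mem hq)⟩
    refine (Finset.card_le_card h1).trans ?_
    rw [Finset.card_sdiff_of_subset (S.Qs_sub_T (lt_trans hk (S.top_lt_len p)))]
    have hTc : S.T.card = S.m := by rw [T, Nat.card_Icc]; omega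
    -- card Qs ≥ m - 2 from any element of SP
    obtain ⟨w'0, hw'0⟩ := Finset.card_pos.1 (by omega : 0 < SP.card)
    obtain ⟨-, -, -, -, hcd⟩ := hwit w'0 hw'0
    have h2 : (insert (S.creator w'0) (insert p (S.Qs p k))).card ≤
        1 + (1 + (S.Qs p k).card) :=
      (Finset.card_insert_le _ _).trans (by
        have := Finset.card_insert_le p (S.Qs p k); omega)
    omega
  have := Finset.card_le_card hsubT
  omega

end Setup
end Adv

namespace Adv
namespace Setup
open Hashgraph

variable {E : Type} [DecidableEq E] (S : Setup E)

set_option linter.unusedSectionVars false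

theorem ssW_top {p : ℕ} (hg : S.Good p (S.top p)) :
    ssWitnesses S.creator S.n S.H' (S.f p (S.top p)) S.r = S.WWf := by
  have hmn := S.hmn
  ext w'
  unfold ssWitnesses
  rw [Finset.mem_filter]
  constructor
  · rintro ⟨hev, hw1, hw2, hw3⟩
    rw [H'_round] at hw2
    obtain ⟨hold, h1, h2, hwc⟩ := S.wit_r hev hw1 hw2
    have hwitH := (S.wit_old hold).1 hw1
    have hrH : S.H.round w' = S.r := by rw [← S.rnd_old hold]; exact hw2
    obtain ⟨hT, -⟩ := S.ss_struct hg hold hwitH hrH hw3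
    exact Finset.mem_image.2 ⟨S.creator w', hT, hwc.symm⟩
  · intro hw
    obtain ⟨u, hu, rfl⟩ := Finset.mem_image.1 hw
    simp only [T, Finset.mem_Icc] at hu
    obtain ⟨hm1, hm2, hm3, -⟩ := S.hw u (by omega) (by omega)
    refine ⟨S.old_mem_ev' hm1, (S.wit_old hm1).2 hm2, ?_, S.ss_top hg hu.1 hu.2⟩
    rw [H'_round, S.rnd_old hm1]; exact hm3

/-! ### preservation on old events -/

theorem sees_old_iff {y z : E} (hy : y ∈ S.H.events) :
    Sees S.creator S.H' y z ↔ Sees S.creator S.H y z := by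
  rw [S.sees_iff (S.old_mem_ev' hy), S.seesH_iff hy]
  exact ⟨fun h => (S.anc_to_H hy h).1, fun h => S.anc_of_H hy h⟩

theorem ss_old_iff {y w' : E} (hy : y ∈ S.H.events) :
    StronglySees S.creator S.n S.H' y w' ↔ StronglySees S.creator S.n S.H y w' := by
  constructor
  · rintro ⟨S2, hsub, hprops, hinj, hcard⟩
    have hold : ∀ z ∈ S2, z ∈ S.H.events := by
      intro z hz
      have := ((S.sees_iff (S.old_mem_ev' hy)).1 (hprops z hz).1)
      exact (S.anc_to_H hy this).2
    refine ⟨S2, fun z hz => (hold z (Finset.mem_coe.1 hz)), fun z hz => ?_, hinj, hcard⟩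
    refine ⟨(S.sees_old_iff hy).1 (hprops z hz).1, ?_⟩
    have h2 := (hprops z hz).2
    rw [S.sees_old_iff (hold z hz)] at h2
    exact h2
  · rintro ⟨S2, hsub, hprops, hinj, hcard⟩
    have hold : ∀ z ∈ S2, z ∈ S.H.events := fun z hz => hsub hz
    refine ⟨S2, fun z hz => S.old_mem_ev' (hold z (Finset.mem_coe.1 hz)),
      fun z hz => ?_, hinj, hcard⟩
    refine ⟨(S.sees_old_iff hy).2 (hprops z hz).1, ?_⟩
    rw [S.sees_old_iff (hold z hz)]
    exact (hprops z hz).2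

theorem ss_old_src {y w' : E} (hy : y ∈ S.H.events)
    (h : StronglySees S.creator S.n S.H' y w') : w' ∈ S.H.events := by
  obtain ⟨S2, hsub, hprops, hinj, hcard⟩ := h
  have : 0 < S2.card := by omega
  obtain ⟨z, hz⟩ := Finset.card_pos.1 this
  have h1 := (S.sees_iff (S.old_mem_ev' hy)).1 (hprops z hz).1
  have hzold := (S.anc_to_H hy h1).2
  have h2 := (S.sees_iff (S.old_mem_ev' hzold)).1 (hprops z hz).2
  exact (S.anc_to_H hzold h2).2

theorem promotedAt_old {e : E} (he : e ∈ S.H.events) (ρ : ℕ) :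
    PromotedAt S.creator S.n S.H' e ρ ↔ PromotedAt S.creator S.n S.H e ρ := by
  constructor
  · rintro ⟨SP, hsub, hprops, hinj, hcard⟩
    have hold : ∀ z ∈ SP, z ∈ S.H.events := by
      intro z hz
      exact S.ss_old_src he (hprops z hz).2.2
    refine ⟨SP, fun z hz => hold z (Finset.mem_coe.1 hz), fun z hz => ?_, hinj, hcard⟩
    obtain ⟨h1, h2, h3⟩ := hprops z hz
    exact ⟨(S.wit_old (hold z hz)).1 h1, by rw [← S.rnd_old (hold z hz)]; exact h2,
      (S.ss_old_iff he).1 h3⟩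
  · rintro ⟨SP, hsub, hprops, hinj, hcard⟩
    have hold : ∀ z ∈ SP, z ∈ S.H.events := fun z hz => hsub hz
    refine ⟨SP, fun z hz => S.old_mem_ev' (hold z (Finset.mem_coe.1 hz)),
      fun z hz => ?_, hinj, hcard⟩
    obtain ⟨h1, h2, h3⟩ := hprops z hz
    exact ⟨(S.wit_old (hold z hz)).2 h1,
      by rw [H'_round, S.rnd_old (hold z hz)]; exact h2, (S.ss_old_iff he).2 h3⟩

theorem maxPR_old {e : E} (he : e ∈ S.H.events) :
    S.H'.maxParentRound e = S.H.maxParentRound e := by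
  unfold Hashgraph.maxParentRound
  rw [H'_sp, H'_op, H'_round, S.sp'_old he, S.op'_old he]
  have h1 : (match S.H.selfParent e with | some y => S.rnd y | none => 0) =
      (match S.H.selfParent e with | some y => S.H.round y | none => 0) := by
    cases hsp : S.H.selfParent e with
    | none => rfl
    | some y => exact S.rnd_old (S.hH.selfParent_mem e he y hsp)
  have h2 : (match S.H.otherParent e with | some y => S.rnd y | none => 0) =
      (match S.H.otherParent e with | some y => S.H.round y | none => 0) := by
    cases hop : S.H.otherParent e with
    | none => rfl
    | some y => exact S.rnd_old (S.hH.otherParent_mem e he y hop)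
  rw [h1, h2]

theorem ssWitnesses_old {y : E} (hy : y ∈ S.H.events) (ρ : ℕ) :
    ssWitnesses S.creator S.n S.H' y ρ = ssWitnesses S.creator S.n S.H y ρ := by
  ext w'
  unfold ssWitnesses
  rw [Finset.mem_filter, Finset.mem_filter]
  constructor
  · rintro ⟨hev, h1, h2, h3⟩
    have hold := S.ss_old_src hy h3
    exact ⟨hold, (S.wit_old hold).1 h1, by rw [← S.rnd_old hold]; exact h2,
      (S.ss_old_iff hy).1 h3⟩
  · rintro ⟨hev, h1, h2, h3⟩
    exact ⟨S.old_mem_ev' hev, (S.wit_old hev).2 h1,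
      by rw [H'_round, S.rnd_old hev]; exact h2, (S.ss_old_iff hy).2 h3⟩

theorem vote'_old {a : E} (ha : a ∈ S.H.events) (b : E) : S.vote' a b = S.H.vote a b := by
  unfold vote'; rw [if_neg (S.old_not_new ha)]

theorem majority_old {b : E} {s : Finset E} (hs : ∀ w ∈ s, w ∈ S.H.events) :
    majorityVote S.H' b s = majorityVote S.H b s := by
  unfold majorityVote
  congr 1
  have : s.filter (fun w => S.H'.vote w b = true) = s.filter (fun w => S.H.vote w b = true) := by
    refine Finset.filter_congr fun w hw => ?_
    rw [H'_vote, S.vote'_old (hs w hw)]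
  rw [this]

end Setup
end Adv

namespace Adv
namespace Setup
open Hashgraph

variable {E : Type} [DecidableEq E] (S : Setup E)

set_option linter.unusedSectionVars false

theorem Qs_low {q j : ℕ} (hj : j < S.m - 1 + S.xf q) : S.Qs q j = ∅ := by
  unfold Qs; rw [if_pos hj]

theorem anc_new_new {p k q j : ℕ} (hg : S.Good p k) (hg' : S.Good q j)
    (h : S.Anc (S.f q j) (S.f p k)) :
    (q = p ∧ j ≤ k) ∨ (q ∈ S.Qs p k ∧ j ≤ S.m - 2) := by
  have hm5 := S.hm5
  rcases S.anc_new_decomp hg h (S.ev_not_old hg') with ⟨j', hj', he⟩ | ⟨q', hq', j', hj', he⟩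
  · obtain ⟨rfl, rfl⟩ := S.ev_inj hg' ⟨hg.1, hg.2.1, by have := hg.2.2; omega⟩ he
    exact Or.inl ⟨rfl, hj'⟩
  · obtain ⟨⟨h2, hm⟩, -, -⟩ := S.Qs_mem hg.2.2 hq'
    obtain ⟨rfl, rfl⟩ := S.ev_inj hg' (S.good_T h2 hm (by omega)) he
    exact Or.inr ⟨hq', hj'⟩

theorem acyclic' : ∀ e ∈ S.ev', ∀ y ∈ S.ev', S.Anc e y → S.Anc y e → e = y := by
  have hm5 := S.hm5
  intro e he y hy h1 h2
  rcases S.mem_ev'.1 he with he' | ⟨p, k, hg, rfl⟩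
  · rcases S.mem_ev'.1 hy with hy' | ⟨p', k', hg', rfl⟩
    · obtain ⟨ha1, -⟩ := S.anc_to_H hy' h1
      obtain ⟨ha2, -⟩ := S.anc_to_H he' h2
      exact S.hH.acyclic e he' y hy' ha1 ha2
    · exact absurd (S.anc_to_H he' h2).2 (S.ev_not_old hg')
  · rcases S.mem_ev'.1 hy with hy' | ⟨p', k', hg', rfl⟩
    · exact absurd (S.anc_to_H hy' h1).2 (S.ev_not_old hg)
    · rcases S.anc_new_new hg' hg h1 with ⟨hpq, hjk⟩ | ⟨hq, hjk⟩ <;>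
        rcases S.anc_new_new hg hg' h2 with ⟨hpq', hjk'⟩ | ⟨hq', hjk'⟩
      · subst hpq
        have : k = k' := by omega
        rw [this]
      · subst hpq
        exact absurd hq' (S.p_not_Qs hg.2.2)
      · subst hpq'
        exact absurd hq (S.p_not_Qs hg'.2.2)
      · rw [S.Qs_low (show k' < S.m - 1 + S.xf p' by omega)] at hq
        exact absurd hq (Finset.notMem_empty p)

theorem spTgt_mem {p k : ℕ} (hg : S.Good p k) : S.spTgt p k ∈ S.ev' := by
  unfold spTgt
  split
  · exact S.old_mem_ev' (S.hw p hg.1 hg.2.1).1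
  · exact S.new_mem_ev' ⟨hg.1, hg.2.1, by have := hg.2.2; omega⟩

theorem opTgt_good {p k : ℕ} (hg : S.Good p k) (h1 : ¬ k < S.m - 1)
    (h2 : ¬ k < S.m - 1 + S.xf p) :
    S.Good (S.aq p (k - (S.m - 1) - S.xf p)) (S.m - 2) ∧ k - (S.m - 1) - S.xf p ≤ S.m - 2 := by
  have hm5 := S.hm5
  have hj : k - (S.m - 1) - S.xf p ≤ S.m - 2 := by
    have := hg.2.2; unfold len at this; omega
  exact ⟨S.good_of_aq hj (by omega), hj⟩

theorem opTgt_mem {p k : ℕ} (hg : S.Good p k) : S.opTgt p k ∈ S.ev' := by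
  have hm5 := S.hm5
  have hmn := S.hmn
  unfold opTgt
  split
  · rename_i h
    have := S.aq_mem (p := p) (i := k) (by omega)
    exact S.old_mem_ev' (S.hw _ (by omega) (by omega)).1
  · split
    · exact S.old_mem_ev' (S.hwx ▸ (S.hw 1 le_rfl (by omega)).1)
    · rename_i h1 h2
      exact S.new_mem_ev' (S.opTgt_good hg h1 h2).1

theorem spTgt_creator {p k : ℕ} (hg : S.Good p k) : S.creator (S.spTgt p k) = p := by
  unfold spTgt
  split
  · exact S.creator_w hg.1 hg.2.1
  · exact S.creator_ev ⟨hg.1, hg.2.1, by have := hg.2.2; omega⟩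

theorem opTgt_creator {p k : ℕ} (hg : S.Good p k) : S.creator (S.opTgt p k) ≠ p := by
  have hm5 := S.hm5
  have hmn := S.hmn
  unfold opTgt
  split
  · rename_i h
    have := S.aq_mem (p := p) (i := k) (by omega)
    rw [S.creator_w (by omega) (by omega)]
    exact S.aq_ne
  · split
    · rename_i h1 h2
      have hpA : p ∈ S.A ∧ p ≠ 1 := by
        by_contra hc
        unfold xf at h2; rw [if_neg hc] at h2; omega
      rw [← S.hwx, S.creator_w le_rfl (by omega)]
      exact fun h => hpA.2 h.symm
    · rename_i h1 h2
      rw [S.creator_ev (S.opTgt_good hg h1 h2).1]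
      exact S.aq_ne

theorem vote'_new {p k : ℕ} (hg : S.Good p k) (b : E) :
    S.vote' (S.f p k) b =
      if S.rnd b = S.r then decide (S.Anc b (S.f p k)) else S.vFormula b (S.f p k) := by
  unfold vote'; rw [if_pos (S.ev_mem_new hg)]

theorem valid' : S.H'.Valid S.creator S.sig S.ts S.n S.c := by
  have hm5 := S.hm5
  constructor
  -- creator_mem
  · intro e he
    rcases S.mem_ev'.1 he with he' | ⟨p, k, hg, rfl⟩
    · exact S.hH.creator_mem e he'
    · rw [S.creator_ev hg]; exact ⟨hg.1, hg.2.1⟩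
  -- selfParent_mem
  · intro e he y hy
    rw [H'_sp] at hy
    rcases S.mem_ev'.1 he with he' | ⟨p, k, hg, rfl⟩
    · rw [S.sp'_old he'] at hy
      exact S.old_mem_ev' (S.hH.selfParent_mem e he' y hy)
    · rw [S.sp'_ev hg] at hy
      injection hy with hy
      exact hy ▸ S.spTgt_mem hg
  -- otherParent_mem
  · intro e he y hy
    rw [H'_op] at hy
    rcases S.mem_ev'.1 he with he' | ⟨p, k, hg, rfl⟩
    · rw [S.op'_old he'] at hy
      exact S.old_mem_ev' (S.hH.otherParent_mem e he' y hy)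
    · rw [S.op'_ev hg] at hy
      injection hy with hy
      exact hy ▸ S.opTgt_mem hg
  -- selfParent_creator
  · intro e he y hy
    rw [H'_sp] at hy
    rcases S.mem_ev'.1 he with he' | ⟨p, k, hg, rfl⟩
    · rw [S.sp'_old he'] at hy
      exact S.hH.selfParent_creator e he' y hy
    · rw [S.sp'_ev hg] at hy
      injection hy with hy
      rw [← hy, S.spTgt_creator hg, S.creator_ev hg]
  -- otherParent_creator
  · intro e he y hy
    rw [H'_op] at hy
    rcases S.mem_ev'.1 he with he' | ⟨p, k, hg, rfl⟩
    · rw [S.op'_old he'] at hy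
      exact S.hH.otherParent_creator e he' y hy
    · rw [S.op'_ev hg] at hy
      injection hy with hy
      rw [← hy, S.creator_ev hg]
      exact S.opTgt_creator hg
  -- acyclic
  · exact S.acyclic'
  -- round_genesis
  · intro e he hsp hop
    rw [H'_sp] at hsp
    rcases S.mem_ev'.1 he with he' | ⟨p, k, hg, rfl⟩
    · rw [H'_round, S.rnd_old he']
      rw [S.sp'_old he'] at hsp
      rw [H'_op, S.op'_old he'] at hop
      exact S.hH.round_genesis e he' hsp hop
    · rw [S.sp'_ev hg] at hsp
      exact absurd hsp (by simp)
  -- round_spec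
  · intro e he hpar
    rcases S.mem_ev'.1 he with he' | ⟨p, k, hg, rfl⟩
    · rw [H'_round, S.rnd_old he', S.maxPR_old he']
      simp only [S.promotedAt_old he' (S.H.maxParentRound e)]
      refine S.hH.round_spec e he' ?_
      rw [H'_sp, S.sp'_old he', H'_op, S.op'_old he'] at hpar
      exact hpar
    · rw [H'_round, S.maxPR hg]
      rcases eq_or_ne k (S.top p) with rfl | hne
      · rw [S.rnd_ev_top hg, if_pos (S.promoted_top hg)]
      · have hk : k < S.top p := by
          have := hg.2.2; unfold top at hne ⊢; omega
        rw [S.rnd_ev_mid hg hne, if_neg (S.not_promoted_mid hg hk)]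
  -- vote_first
  · intro x₀ hx₀ hwx₀ y hy hwy hr
    rw [H'_round] at hr
    by_cases hynew : y ∈ S.newEvents
    · obtain ⟨p, k, hg, rfl⟩ := S.mem_newEvents.1 hynew
      have hk : k = S.top p := (S.wit_new hg).1 hwy
      subst hk
      rw [S.rnd_ev_top hg] at hr
      have hx₀r : S.rnd x₀ = S.r := by omega
      show S.vote' _ x₀ = _
      rw [S.vote'_new hg, if_pos hx₀r, decide_eq_decide]
      exact (S.sees_iff hy).symm
    · have hyold : y ∈ S.H.events := by
        rcases S.mem_ev'.1 hy with h | ⟨p, k, hg, rfl⟩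
        · exact h
        · exact absurd (S.ev_mem_new hg) hynew
      have hx₀old : x₀ ∈ S.H.events := by
        rcases S.mem_ev'.1 hx₀ with h | ⟨p, k, hg, rfl⟩
        · exact h
        · exfalso
          have hk : k = S.top p := (S.wit_new hg).1 hwx₀
          subst hk
          rw [S.rnd_old hyold, S.rnd_ev_top hg] at hr
          have := S.hmax y hyold
          omega
      rw [S.rnd_old hyold, S.rnd_old hx₀old] at hr
      show S.vote' y x₀ = _
      rw [S.vote'_old hyold]
      rw [S.hH.vote_first x₀ hx₀old ((S.wit_old hx₀old).1 hwx₀) y hyold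
        ((S.wit_old hyold).1 hwy) hr, decide_eq_decide]
      exact (S.sees_old_iff hyold).symm
  -- vote_later
  · intro x₀ hx₀ hwx₀ y hy hwy hr
    rw [H'_round] at hr
    by_cases hynew : y ∈ S.newEvents
    · obtain ⟨p, k, hg, rfl⟩ := S.mem_newEvents.1 hynew
      have hk : k = S.top p := (S.wit_new hg).1 hwy
      subst hk
      rw [S.rnd_ev_top hg] at hr
      have hx₀old : x₀ ∈ S.H.events := by
        rcases S.mem_ev'.1 hx₀ with h | ⟨p', k', hg', rfl⟩
        · exact h
        · exfalso
          have hk' : k' = S.top p' := (S.wit_new hg').1 hwx₀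
          subst hk'
          rw [S.rnd_ev_top hg'] at hr
          omega
      rw [S.rnd_old hx₀old] at hr
      have hx₀r : S.rnd x₀ ≠ S.r := by
        rw [S.rnd_old hx₀old]
        omega
      have hWWfold : ∀ w' ∈ S.WWf, w' ∈ S.H.events := by
        intro w' hw'
        obtain ⟨u, hu, rfl⟩ := Finset.mem_image.1 hw'
        simp only [T, Finset.mem_Icc] at hu
        have := S.hmn
        exact (S.hw u (by omega) (by omega)).1
      have hrtop : S.H'.round (S.f p (S.top p)) = S.r + 1 := by
        rw [H'_round, S.rnd_ev_top hg]
      have hrx : S.H'.round x₀ = S.H.round x₀ := by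
        rw [H'_round, S.rnd_old hx₀old]
      have hmaj : majorityVote S.H' x₀ S.WWf = S.M x₀ := by
        rw [S.majority_old hWWfold]
        rfl
      have hfilter : S.WWf.filter (fun w' => S.H'.vote w' x₀ = S.M x₀) =
          S.WWf.filter (fun w' => S.H.vote w' x₀ = S.M x₀) := by
        refine Finset.filter_congr fun w' hw' => ?_
        rw [H'_vote, S.vote'_old (hWWfold w' hw')]
      show S.vote' _ x₀ = _
      rw [S.vote'_new hg, if_neg hx₀r, hrtop]
      simp only [Nat.add_sub_cancel]
      rw [S.ssW_top hg, hrx, hmaj, hfilter]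
      rfl
    · have hyold : y ∈ S.H.events := by
        rcases S.mem_ev'.1 hy with h | ⟨p, k, hg, rfl⟩
        · exact h
        · exact absurd (S.ev_mem_new hg) hynew
      have hx₀old : x₀ ∈ S.H.events := by
        rcases S.mem_ev'.1 hx₀ with h | ⟨p', k', hg', rfl⟩
        · exact h
        · exfalso
          have hk' : k' = S.top p' := (S.wit_new hg').1 hwx₀
          subst hk'
          rw [S.rnd_ev_top hg', S.rnd_old hyold] at hr
          have := S.hmax y hyold
          omega
      rw [S.rnd_old hyold, S.rnd_old hx₀old] at hr
      have hry : S.H'.round y = S.H.round y := by rw [H'_round, S.rnd_old hyold]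
      have hrx : S.H'.round x₀ = S.H.round x₀ := by rw [H'_round, S.rnd_old hx₀old]
      have holdmem : ∀ w' ∈ ssWitnesses S.creator S.n S.H y (S.H.round y - 1),
          w' ∈ S.H.events := by
        intro w' hw'
        exact Finset.mem_of_mem_filter _ hw'
      have hmaj : majorityVote S.H' x₀ (ssWitnesses S.creator S.n S.H y (S.H.round y - 1)) =
          majorityVote S.H x₀ (ssWitnesses S.creator S.n S.H y (S.H.round y - 1)) :=
        S.majority_old holdmem
      have hfilter : (ssWitnesses S.creator S.n S.H y (S.H.round y - 1)).filter
            (fun w' => S.H'.vote w' x₀ =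
              majorityVote S.H x₀ (ssWitnesses S.creator S.n S.H y (S.H.round y - 1))) =
          (ssWitnesses S.creator S.n S.H y (S.H.round y - 1)).filter
            (fun w' => S.H.vote w' x₀ =
              majorityVote S.H x₀ (ssWitnesses S.creator S.n S.H y (S.H.round y - 1))) := by
        refine Finset.filter_congr fun w' hw' => ?_
        rw [H'_vote, S.vote'_old (holdmem w' hw')]
      show S.vote' y x₀ = _
      rw [S.vote'_old hyold, hry, hrx, S.ssWitnesses_old hyold, hmaj, hfilter]
      exact S.hH.vote_later x₀ hx₀old ((S.wit_old hx₀old).1 hwx₀) y hyold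
        ((S.wit_old hyold).1 hwy) hr

theorem extends' : Extends S.H' S.H := by
  refine ⟨fun e he => S.old_mem_ev' he, fun e he => ?_⟩
  exact ⟨S.sp'_old he, S.op'_old he, S.rnd_old he, fun y hy => S.vote'_old he y⟩

end Setup
end Adv

namespace Adv
namespace Setup
open Hashgraph

variable {E : Type} [DecidableEq E] (S : Setup E)

set_option linter.unusedSectionVars false

theorem good_top {p : ℕ} (h1 : 1 ≤ p) (h2 : p ≤ S.n) : S.Good p (S.top p) :=
  ⟨h1, h2, S.top_lt_len p⟩

theorem good_zero {p : ℕ} (h1 : 1 ≤ p) (h2 : p ≤ S.n) : S.Good p 0 :=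
  ⟨h1, h2, by have := S.hm5; unfold len; omega⟩

theorem uniq_wit : ∀ p, 1 ≤ p → p ≤ S.n →
    ∃! w, w ∈ S.H'.events ∧ S.H'.Witness w ∧ S.H'.round w = S.r + 1 ∧
      S.creator w = p := by
  intro p h1 h2
  have hg := S.good_top h1 h2
  refine ⟨S.f p (S.top p), ⟨S.new_mem_ev' hg, (S.wit_new hg).2 rfl,
    by rw [H'_round]; exact S.rnd_ev_top hg, S.creator_ev hg⟩, ?_⟩
  rintro y ⟨hy, hwy, hry, hcy⟩
  rw [H'_round] at hry
  obtain ⟨p', hg', rfl⟩ := S.wit_r1 hy hwy hry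
  rw [S.creator_ev hg'] at hcy
  subst hcy
  rfl

theorem tops_noanc : ∀ w ∈ S.H'.events, S.H'.Witness w → S.H'.round w = S.r + 1 →
    ∀ w' ∈ S.H'.events, S.H'.Witness w' → S.H'.round w' = S.r + 1 →
    S.H'.Ancestor w w' → w = w' := by
  have hm5 := S.hm5
  intro w hw hww hrw w' hw' hww' hrw' hanc
  rw [H'_round] at hrw hrw'
  obtain ⟨p, hg, rfl⟩ := S.wit_r1 hw hww hrw
  obtain ⟨p', hg', rfl⟩ := S.wit_r1 hw' hww' hrw'
  rw [anc_eq] at hanc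
  rcases S.anc_new_new hg' hg hanc with ⟨rfl, hle⟩ | ⟨hq, hle⟩
  · rfl
  · exfalso
    have : 2 * (S.m - 1) - 1 ≤ S.top p := by unfold top len; omega
    omega

theorem A_sub : S.A ⊆ Finset.Icc 1 S.n := by
  have hn := S.hn
  intro p hp
  unfold A at hp
  simp only [Finset.mem_insert, Finset.mem_Icc] at hp
  rcases hp with rfl | rfl | hp
  · simp; omega
  · simp; omega
  · simp
    constructor
    · omega
    · have : S.n / 2 + 1 ≤ S.n := by omega
      omega

theorem one_mem_A : 1 ∈ S.A := Finset.mem_insert_self 1 _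

theorem A_card : S.A.card = S.n / 2 := by
  have hn := S.hn
  unfold A
  rw [Finset.card_insert_of_notMem, Finset.card_insert_of_notMem, Nat.card_Icc]
  · omega
  · simp only [Finset.mem_Icc]; omega
  · simp only [Finset.mem_insert, Finset.mem_Icc]; omega

theorem anc_x_iff {p : ℕ} (h1 : 1 ≤ p) (h2 : p ≤ S.n) :
    (S.Anc S.x (S.f p (S.top p)) ↔ p ∈ S.A) := by
  constructor
  · intro h
    have hxm : S.x ∈ S.H.events := S.hwx ▸ (S.hw 1 le_rfl (by have := S.hn; omega)).1
    obtain ⟨u, hu, ha⟩ := S.anc_old_decomp (S.good_top h1 h2) h hxm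
    obtain ⟨hu1, hu2⟩ := S.WSk_bound (S.good_top h1 h2) hu
    obtain ⟨hm1, hm2, hm3, -⟩ := S.hw u hu1 hu2
    have hxeq : S.x = S.w u := by
      refine S.hnoanc S.x hxm ?_ ?_ (S.w u) hm1 hm2 hm3 ha
      · rw [← S.hwx]; exact (S.hw 1 le_rfl (by have := S.hn; omega)).2.1
      · rw [← S.hwx]; exact (S.hw 1 le_rfl (by have := S.hn; omega)).2.2.1
    have hu1' : u = 1 := by
      have := S.creator_w hu1 hu2
      rw [← hxeq] at this
      rw [← this, ← S.hwx, S.creator_w le_rfl (by have := S.hn; omega)]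
    subst hu1'
    unfold WSk at hu
    rcases Finset.mem_insert.1 hu with h' | h'
    · rw [← h']; exact S.one_mem_A
    · rcases Finset.mem_union.1 h' with h' | h'
      · exfalso; simp only [T, Finset.mem_Icc] at h'; omega
      · split at h'
        · rename_i hc; exact hc.1
        · simp at h'
  · intro hA
    exact S.anc_x_top (S.good_zero h1 h2) hA

theorem top_injOn {s : Finset ℕ} (hs : s ⊆ Finset.Icc 1 S.n) :
    Set.InjOn (fun p => S.f p (S.top p)) ↑s := by
  intro a ha b hb h
  simp only [Finset.mem_coe] at ha hb
  have ha' := Finset.mem_Icc.1 (hs ha)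
  have hb' := Finset.mem_Icc.1 (hs hb)
  exact (S.ev_inj (S.good_top ha'.1 ha'.2) (S.good_top hb'.1 hb'.2) h).1

theorem filter_eq_A :
    S.ev'.filter (fun e => S.H'.Witness e ∧ S.H'.round e = S.r + 1 ∧
        S.H'.Ancestor S.x e) =
      S.A.image (fun p => S.f p (S.top p)) := by
  ext e
  rw [Finset.mem_filter, Finset.mem_image]
  constructor
  · rintro ⟨he, hw, hr, hx⟩
    rw [H'_round] at hr
    obtain ⟨p, hg, rfl⟩ := S.wit_r1 he hw hr
    rw [anc_eq] at hx
    exact ⟨p, (S.anc_x_iff hg.1 hg.2.1).1 hx, rfl⟩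
  · rintro ⟨p, hp, rfl⟩
    obtain ⟨hp1, hp2⟩ := Finset.mem_Icc.1 (S.A_sub hp)
    have hg := S.good_top hp1 hp2
    refine ⟨S.new_mem_ev' hg, (S.wit_new hg).2 rfl,
      by rw [H'_round]; exact S.rnd_ev_top hg, ?_⟩
    rw [anc_eq]
    exact (S.anc_x_iff hp1 hp2).2 hp

theorem filter_eq_B :
    S.ev'.filter (fun e => S.H'.Witness e ∧ S.H'.round e = S.r + 1 ∧
        ¬ S.H'.Ancestor S.x e) =
      (Finset.Icc 1 S.n \ S.A).image (fun p => S.f p (S.top p)) := by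
  ext e
  rw [Finset.mem_filter, Finset.mem_image]
  constructor
  · rintro ⟨he, hw, hr, hx⟩
    rw [H'_round] at hr
    obtain ⟨p, hg, rfl⟩ := S.wit_r1 he hw hr
    rw [anc_eq] at hx
    refine ⟨p, Finset.mem_sdiff.2 ⟨Finset.mem_Icc.2 ⟨hg.1, hg.2.1⟩, fun hA => ?_⟩, rfl⟩
    exact hx ((S.anc_x_iff hg.1 hg.2.1).2 hA)
  · rintro ⟨p, hp, rfl⟩
    obtain ⟨hpn, hpA⟩ := Finset.mem_sdiff.1 hp
    obtain ⟨hp1, hp2⟩ := Finset.mem_Icc.1 hpn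
    have hg := S.good_top hp1 hp2
    refine ⟨S.new_mem_ev' hg, (S.wit_new hg).2 rfl,
      by rw [H'_round]; exact S.rnd_ev_top hg, ?_⟩
    rw [anc_eq]
    exact fun hx => hpA ((S.anc_x_iff hp1 hp2).1 hx)

theorem filterA_card :
    (S.ev'.filter (fun e => S.H'.Witness e ∧ S.H'.round e = S.r + 1 ∧
        S.H'.Ancestor S.x e)).card = S.n / 2 := by
  rw [S.filter_eq_A, Finset.card_image_of_injOn (S.top_injOn S.A_sub), S.A_card]

theorem filterB_card :
    (S.ev'.filter (fun e => S.H'.Witness e ∧ S.H'.round e = S.r + 1 ∧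
        ¬ S.H'.Ancestor S.x e)).card = S.n - S.n / 2 := by
  rw [S.filter_eq_B, Finset.card_image_of_injOn (S.top_injOn (Finset.sdiff_subset))]
  rw [Finset.card_sdiff_of_subset S.A_sub, S.A_card, Nat.card_Icc]
  omega

theorem votes_top : ∀ e ∈ S.H'.events, S.H'.Witness e → S.H'.round e = S.r + 1 →
    (S.H'.Ancestor S.x e → S.H'.vote e S.x = true) ∧
    (¬ S.H'.Ancestor S.x e → S.H'.vote e S.x = false) := by
  intro e he hw hr
  rw [H'_round] at hr
  obtain ⟨p, hg, rfl⟩ := S.wit_r1 he hw hr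
  have hxr : S.rnd S.x = S.r := by
    rw [← S.hwx]; exact S.rnd_w le_rfl (by have := S.hn; omega)
  have hv : S.H'.vote (S.f p (S.top p)) S.x = decide (S.Anc S.x (S.f p (S.top p))) := by
    rw [H'_vote, S.vote'_new hg, if_pos hxr]
  rw [anc_eq, hv]
  constructor
  · intro h; simp [h]
  · intro h; simp [h]

end Setup
end Adv

/-- Base case of the delay attack: from a fork-free hashgraph whose maximal round is
`r`, in which each party has exactly one round-`r` witness, round-`r` witnesses have
no proper same-creator descendants and do not see each other, and `x` is party 1's
round-`r` witness, the adversary can build a fork-free extension in which each party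
has exactly one round-`(r+1)` witness, no round-`(r+1)` witness is an ancestor of
another, exactly `⌊n/2⌋` of them have `x` as an ancestor (and hence vote yes in
`x`'s election) while the remaining `n - ⌊n/2⌋` do not (and hence vote no). -/
theorem stmt14 {E : Type} [DecidableEq E] (creator sig ts : E → ℕ) (n c r : ℕ)
    (hn : 7 ≤ n)
    (hplenty : ∀ p, 1 ≤ p → p ≤ n → {e : E | creator e = p}.Infinite)
    (H : Hashgraph E) (hH : H.Valid creator sig ts n c) (hff : ForkFree creator H)
    (hmax : ∀ e ∈ H.events, H.round e ≤ r)
    (huniq : ∀ p, 1 ≤ p → p ≤ n →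
      ∃! w, w ∈ H.events ∧ H.Witness w ∧ H.round w = r ∧ creator w = p)
    (htop : ∀ w ∈ H.events, H.Witness w → H.round w = r →
      ∀ e ∈ H.events, creator e = creator w → H.Ancestor w e → e = w)
    (hnoanc : ∀ w ∈ H.events, H.Witness w → H.round w = r →
      ∀ w' ∈ H.events, H.Witness w' → H.round w' = r → H.Ancestor w w' → w = w')
    (x : E) (hx : x ∈ H.events) (hxw : H.Witness x) (hxr : H.round x = r)
    (hxc : creator x = 1) :
    ∃ H' : Hashgraph E,
      H'.Valid creator sig ts n c ∧ ForkFree creator H' ∧ Extends H' H ∧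
      (∀ p, 1 ≤ p → p ≤ n →
        ∃! w, w ∈ H'.events ∧ H'.Witness w ∧ H'.round w = r + 1 ∧ creator w = p) ∧
      (∀ w ∈ H'.events, H'.Witness w → H'.round w = r + 1 →
        ∀ w' ∈ H'.events, H'.Witness w' → H'.round w' = r + 1 →
          H'.Ancestor w w' → w = w') ∧
      (H'.events.filter
        (fun w => H'.Witness w ∧ H'.round w = r + 1 ∧ H'.Ancestor x w)).card = n / 2 ∧
      (H'.events.filter
        (fun w => H'.Witness w ∧ H'.round w = r + 1 ∧ ¬ H'.Ancestor x w)).card = n - n / 2 ∧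
      (∀ w ∈ H'.events, H'.Witness w → H'.round w = r + 1 →
        (H'.Ancestor x w → H'.vote w x = true) ∧
        (¬ H'.Ancestor x w → H'.vote w x = false)) := by
  classical
  -- the round-r witness of each party
  have hWex : ∀ p, ∃ w : E, ((1 ≤ p ∧ p ≤ n) →
      (w ∈ H.events ∧ H.Witness w ∧ H.round w = r ∧ creator w = p)) := by
    intro p
    by_cases h : 1 ≤ p ∧ p ≤ n
    · obtain ⟨w0, hw0, -⟩ := huniq p h.1 h.2
      exact ⟨w0, fun _ => hw0⟩
    · exact ⟨x, fun hc => absurd hc h⟩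
  choose W hW using hWex
  have hWu : ∀ p, 1 ≤ p → p ≤ n → ∀ u ∈ H.events, H.Witness u → H.round u = r →
      creator u = p → u = W p := by
    intro p h1 h2 u hu hwit hru hcu
    obtain ⟨w0, hw0, hun⟩ := huniq p h1 h2
    exact (hun u ⟨hu, hwit, hru, hcu⟩).trans (hun (W p) (hW p ⟨h1, h2⟩)).symm
  have hWx : W 1 = x := by
    exact ((hWu 1 le_rfl (by omega) x hx hxw hxr hxc).symm)
  -- fresh events for each party
  have hfex : ∀ p, ∃ g : ℕ → E, ((1 ≤ p ∧ p ≤ n) →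
      ((∀ i, creator (g i) = p ∧ g i ∉ H.events) ∧ Function.Injective g)) := by
    intro p
    by_cases h : 1 ≤ p ∧ p ≤ n
    · have hinf := (hplenty p h.1 h.2).diff H.events.finite_toSet
      have emb : ℕ ↪ ({e : E | creator e = p} \ ↑H.events : Set E) := hinf.natEmbedding
      refine ⟨fun i => (emb i).1, fun _ => ⟨fun i => ?_, fun i j hij => ?_⟩⟩
      · have h2 := (emb i).2
        simp only [Set.mem_diff, Set.mem_setOf_eq, Finset.mem_coe] at h2
        exact ⟨h2.1, h2.2⟩
      · exact emb.injective (Subtype.ext hij)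
    · exact ⟨fun _ => x, fun hc => absurd hc h⟩
  choose F hF using hfex
  set S : Adv.Setup E :=
    { creator := creator, sig := sig, ts := ts, n := n, c := c, r := r, H := H, x := x,
      w := W, f := F, hn := hn, hH := hH, hff := hff, hmax := hmax, htop := htop,
      hnoanc := hnoanc,
      hw := fun p h1 h2 => hW p ⟨h1, h2⟩,
      hwu := hWu, hwx := hWx,
      hfc := fun p h1 h2 i => ((hF p ⟨h1, h2⟩).1 i).1,
      hfH := fun p h1 h2 i => ((hF p ⟨h1, h2⟩).1 i).2,
      hfi := fun p h1 h2 => (hF p ⟨h1, h2⟩).2 } with hS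
  exact ⟨S.H', S.valid', S.forkfree', S.extends', S.uniq_wit, S.tops_noanc,
    S.filterA_card, S.filterB_card, S.votes_top⟩
end
end
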